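/- arXiv:2206.03539 — 2 statements merged into one kernel-verified Lean document; each statement's English description precedes it below -/
import Mathlib

section
/- Let r ∈ [0,π), k ≥ 0, and let Θ ⊆ S¹ be a nonempty finite set with diam(Θ) ≤ r. (i) If there exist distinct points θ_0,…,θ_{2k} ∈ Θ such that the 4k+2 points θ_0,…,θ_{2k} (colored blue) together with their antipodes θ_0+π,…,θ_{2k}+π (colored red) are pairwise distinct and alternate in color in cyclic order around S¹, then arcs_r(Θ) ≥ 2k+1. (ii) Conversely, if arcs_r(Θ) = 2k+1 and θ_0,…,θ_{2k} are points of Θ lying in pairwise distinct (Θ,r)-arcs, then the points θ_0,…,θ_{2k} (colored blue) together with their antipodes (colored red) alternate in color in cyclic order around S¹. -/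
open MeasureTheory Metric Filter
open scoped unitInterval

noncomputable section

/-- The circle of circumference `2π`, modeled as `ℝ/2πℤ` with the quotient (geodesic) metric. -/
abbrev S1 : Type := AddCircle (2 * Real.pi)

instance : Fact (0 < 2 * Real.pi) := ⟨by positivity⟩

/-- A closed arc of the circle: the image of a closed interval `[a,b]` (with
`a ≤ b < a + 2π`, so possibly a single point) under the projection `ℝ → ℝ/2πℤ`. -/
def IsClosedArc (A : Set S1) : Prop :=
  ∃ a b : ℝ, a ≤ b ∧ b < a + 2 * Real.pi ∧ A = (fun t : ℝ => (t : S1)) '' Set.Icc a b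

/-- A point `x` is excluded by `Θ` (at scale `r`) if its distance from some point
of `Θ` exceeds `r`. -/
def ExcludedBy (r : ℝ) (Θ : Set S1) (x : S1) : Prop :=
  ∃ θ ∈ Θ, r < dist θ x

/-- A `(Θ,r)`-arc: a closed arc, maximal among closed arcs that contain at least one
point of `Θ` and contain no point excluded by `Θ`. -/
def IsArc (r : ℝ) (Θ : Set S1) (A : Set S1) : Prop :=
  IsClosedArc A ∧ (A ∩ Θ).Nonempty ∧ (∀ x ∈ A, ¬ ExcludedBy r Θ x) ∧
    ∀ B : Set S1, IsClosedArc B → (B ∩ Θ).Nonempty → (∀ x ∈ B, ¬ ExcludedBy r Θ x) →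
      A ⊆ B → A = B

/-- `arcs_r(Θ)`: the number of `(Θ,r)`-arcs. -/
def arcsCount (r : ℝ) (Θ : Set S1) : ℕ :=
  Set.ncard {A : Set S1 | IsArc r Θ A}
/-- `A` is one of the two open arcs from `x` to `y` (read counterclockwise from `x` to `y`). -/
def IsOpenArcFromTo (x y : S1) (A : Set S1) : Prop :=
  ∃ a b : ℝ, (a : S1) = x ∧ (b : S1) = y ∧ a < b ∧ b < a + 2 * Real.pi ∧
    A = (fun t : ℝ => (t : S1)) '' Set.Ioo a b

/-- Two finite collections of points, `B` colored blue and `R` colored red, alternate in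
color in cyclic order around the circle: the points are pairwise distinct, and between any
two distinct points of the same color (on either of the two open arcs determined by them)
there is a point of the opposite color. -/
def AlternateColors (B R : Set S1) : Prop :=
  Disjoint B R ∧
  (∀ x ∈ B, ∀ y ∈ B, x ≠ y → ∀ A : Set S1, IsOpenArcFromTo x y A → (A ∩ R).Nonempty) ∧
  (∀ x ∈ R, ∀ y ∈ R, x ≠ y → ∀ A : Set S1, IsOpenArcFromTo x y A → (A ∩ B).Nonempty)

section ArcsProof
open Metric Set
set_option maxHeartbeats 1000000

lemma S1.coe_eq_coe_iff {s t : ℝ} : (s : S1) = (t : S1) ↔ ∃ m : ℤ, t - s = 2 * Real.pi * m := by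
  constructor
  · intro h
    obtain ⟨m, hm⟩ := AddSubgroup.mem_zmultiples_iff.mp (QuotientAddGroup.eq_iff_sub_mem.mp h)
    refine ⟨-m, ?_⟩
    rw [zsmul_eq_mul] at hm
    push_cast
    linarith
  · rintro ⟨m, hm⟩
    refine QuotientAddGroup.eq_iff_sub_mem.mpr (AddSubgroup.mem_zmultiples_iff.mpr ⟨-m, ?_⟩)
    rw [zsmul_eq_mul]
    push_cast
    linarith

lemma S1.norm_coe_le_sub (s : ℝ) (m : ℤ) : ‖(s : S1)‖ ≤ |s - 2 * Real.pi * m| := by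
  have hp : (0:ℝ) < 2 * Real.pi := by positivity
  rw [AddCircle.norm_eq' _ hp]
  have h := round_le ((2 * Real.pi)⁻¹ * s) m
  calc 2 * Real.pi * |(2 * Real.pi)⁻¹ * s - ↑(round ((2 * Real.pi)⁻¹ * s))|
      ≤ 2 * Real.pi * |(2 * Real.pi)⁻¹ * s - (m:ℝ)| := by
        exact mul_le_mul_of_nonneg_left h hp.le
    _ = |2 * Real.pi * ((2 * Real.pi)⁻¹ * s - (m:ℝ))| := by
        rw [abs_mul, abs_of_pos hp]
    _ = |s - 2 * Real.pi * m| := by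
        rw [mul_sub, ← mul_assoc, mul_inv_cancel₀ hp.ne', one_mul]

lemma S1.norm_coe_le (s : ℝ) : ‖(s : S1)‖ ≤ |s| := by
  simpa using S1.norm_coe_le_sub s 0

lemma S1.norm_coe_eq {s : ℝ} (h : |s| ≤ Real.pi) : ‖(s : S1)‖ = |s| := by
  have hp : (0:ℝ) < 2 * Real.pi := by positivity
  have hπ := Real.pi_pos
  refine le_antisymm (S1.norm_coe_le s) ?_
  rw [AddCircle.norm_eq]
  set m := round ((2 * Real.pi)⁻¹ * s) with hm
  rcases eq_or_ne m 0 with h0 | h0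
  · rw [h0]; simp
  · have hm1 : (1:ℝ) ≤ |(m:ℝ)| := by
      have : (1:ℤ) ≤ |m| := Int.one_le_abs h0
      calc (1:ℝ) = ((1:ℤ):ℝ) := by norm_num
        _ ≤ ((|m|:ℤ):ℝ) := by exact_mod_cast this
        _ = |(m:ℝ)| := by push_cast; ring
    have : 2 * Real.pi - |s| ≤ |s - ↑m * (2*Real.pi)| := by
      have h2 : |(m:ℝ) * (2 * Real.pi)| = |(m:ℝ)| * (2 * Real.pi) := by
        rw [abs_mul, abs_of_pos hp]
      have h3 : 2 * Real.pi ≤ |(m:ℝ) * (2 * Real.pi)| := by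
        rw [h2]; nlinarith
      calc 2 * Real.pi - |s| ≤ |(m:ℝ) * (2*Real.pi)| - |s| := by linarith
        _ ≤ |s - ↑m * (2*Real.pi)| := by
            have := abs_sub_abs_le_abs_sub ((m:ℝ) * (2*Real.pi)) s
            rw [abs_sub_comm] at this
            linarith [this]
    have : Real.pi ≤ |s - ↑m * (2*Real.pi)| := by linarith
    linarith [this, h]

lemma S1.coe_sub_coe (s t : ℝ) : (s : S1) - (t : S1) = ((s - t : ℝ) : S1) := by
  rw [sub_eq_iff_eq_add, ← AddCircle.coe_add]
  norm_num

lemma S1.dist_coe_le (s t : ℝ) : dist (s : S1) (t : S1) ≤ |s - t| := by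
  rw [dist_eq_norm, S1.coe_sub_coe]; exact S1.norm_coe_le _

lemma S1.dist_coe_eq {s t : ℝ} (h : |s - t| ≤ Real.pi) : dist (s : S1) (t : S1) = |s - t| := by
  rw [dist_eq_norm, S1.coe_sub_coe]; exact S1.norm_coe_eq h

lemma S1.dist_pi (s t : ℝ) (h : t - s = Real.pi) : dist (s : S1) (t : S1) = Real.pi := by
  rw [S1.dist_coe_eq]
  · rw [abs_sub_comm, h, abs_of_pos Real.pi_pos]
  · rw [abs_sub_comm, h, abs_of_pos Real.pi_pos]

/-- canonical lift near a center point -/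
lemma S1.exists_lift (x : S1) (c : ℝ) :
    ∃ t : ℝ, (t : S1) = x ∧ |t - c| ≤ Real.pi ∧ dist (c : S1) x = |t - c| := by
  have hp : (0:ℝ) < 2 * Real.pi := by positivity
  induction x using QuotientAddGroup.induction_on with
  | H b =>
    refine ⟨toIocMod hp (c - Real.pi) b, ?_, ?_, ?_⟩
    · rw [S1.coe_eq_coe_iff]
      exact ⟨toIocDiv hp (c - Real.pi) b, by
        have := self_sub_toIocMod hp (c - Real.pi) b
        rw [zsmul_eq_mul] at this
        linarith⟩
    · have ht := toIocMod_mem_Ioc hp (c - Real.pi) b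
      rw [abs_le]
      constructor
      · linarith [ht.1]
      · linarith [ht.2]
    · have ht := toIocMod_mem_Ioc hp (c - Real.pi) b
      have habs : |toIocMod hp (c - Real.pi) b - c| ≤ Real.pi := by
        rw [abs_le]; constructor
        · linarith [ht.1]
        · linarith [ht.2]
      have hcoe : ((toIocMod hp (c - Real.pi) b : ℝ) : S1) = (b : S1) := by
        rw [S1.coe_eq_coe_iff]
        exact ⟨toIocDiv hp (c - Real.pi) b, by
          have := self_sub_toIocMod hp (c - Real.pi) b
          rw [zsmul_eq_mul] at this
          linarith⟩
      rw [← hcoe, S1.dist_coe_eq (by rwa [abs_sub_comm]), abs_sub_comm]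

lemma S1.image_Icc_shift (a b : ℝ) (m : ℤ) :
    (fun t : ℝ => (t : S1)) '' Icc a b
      = (fun t : ℝ => (t : S1)) '' Icc (a + 2 * Real.pi * m) (b + 2 * Real.pi * m) := by
  have : Icc (a + 2 * Real.pi * m) (b + 2 * Real.pi * m)
      = (fun s => s + 2 * Real.pi * m) '' Icc a b := by
    rw [image_add_const_Icc]
  rw [this, image_image]
  refine image_congr fun s _ => ?_
  exact (S1.coe_eq_coe_iff.mpr ⟨-m, by push_cast; ring⟩).symm

namespace Arcs
variable {r : ℝ} {Θ : Set S1}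

def NN (r : ℝ) (Θ : Set S1) : Set S1 := {x | ∀ θ ∈ Θ, dist θ x ≤ r}

lemma mem_NN_iff {x : S1} : x ∈ NN r Θ ↔ ¬ ExcludedBy r Θ x := by
  unfold NN ExcludedBy
  push_neg
  rfl

lemma theta_sub_NN (hfin : Θ.Finite) (hdiam : Metric.diam Θ ≤ r) : Θ ⊆ NN r Θ := by
  intro x hx θ hθ
  exact le_trans (Metric.dist_le_diam_of_mem hfin.isBounded hθ hx) hdiam

lemma NN_closed : IsClosed (NN r Θ) := by
  have : NN r Θ = ⋂ θ ∈ Θ, {x | dist θ x ≤ r} := by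
    ext x; simp [NN]
  rw [this]
  exact isClosed_biInter fun θ _ => isClosed_le (Continuous.dist continuous_const continuous_id) continuous_const

lemma anti_notin_NN (hrπ : r < Real.pi) {t : ℝ} (ht : (t : S1) ∈ Θ) :
    ((t + Real.pi : ℝ) : S1) ∉ NN r Θ := by
  intro h
  have := h _ ht
  rw [S1.dist_pi t (t + Real.pi) (by ring)] at this
  linarith

/-- continuity of the projection -/
lemma coe_cont : Continuous (fun t : ℝ => (t : S1)) := continuous_quotient_mk'

/-- main construction: maximal arc through a point of Θ -/
lemma exists_good_arc (hrπ : r < Real.pi) (hfin : Θ.Finite) (hdiam : Metric.diam Θ ≤ r)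
    {t : ℝ} (ht : (t : S1) ∈ Θ) :
    ∃ α β : ℝ, α ≤ t ∧ t ≤ β ∧ t - Real.pi < α ∧ β < t + Real.pi ∧
      (∀ s ∈ Icc α β, (s : S1) ∈ NN r Θ) ∧
      (∀ a b : ℝ, a ≤ b → b < a + 2 * Real.pi → (∀ s ∈ Icc a b, (s : S1) ∈ NN r Θ) →
        (t : S1) ∈ (fun t : ℝ => (t : S1)) '' Icc a b →
        (fun t : ℝ => (t : S1)) '' Icc a b ⊆ (fun t : ℝ => (t : S1)) '' Icc α β) := by
  have htN : (t : S1) ∈ NN r Θ := theta_sub_NN hfin hdiam ht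
  have hπ := Real.pi_pos
  set NR : Set ℝ := {s : ℝ | (s : S1) ∈ NN r Θ} with hNR
  have hNRclosed : IsClosed NR := NN_closed.preimage coe_cont
  set up : Set ℝ := {b : ℝ | b ∈ Icc t (t + Real.pi) ∧ ∀ s ∈ Icc t b, s ∈ NR} with hup
  set dn : Set ℝ := {a : ℝ | a ∈ Icc (t - Real.pi) t ∧ ∀ s ∈ Icc a t, s ∈ NR} with hdn
  have hup_ne : t ∈ up := ⟨⟨le_refl t, by linarith⟩, fun s hs => by
    have : s = t := le_antisymm hs.2 hs.1
    rw [this]; exact htN⟩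
  have hdn_ne : t ∈ dn := ⟨⟨by linarith, le_refl t⟩, fun s hs => by
    have : s = t := le_antisymm hs.2 hs.1
    rw [this]; exact htN⟩
  have hup_bdd : BddAbove up := ⟨t + Real.pi, fun b hb => hb.1.2⟩
  have hdn_bdd : BddBelow dn := ⟨t - Real.pi, fun a ha => ha.1.1⟩
  set β := sSup up with hβ
  set α := sInf dn with hα
  have htβ : t ≤ β := le_csSup hup_bdd hup_ne
  have hβle : β ≤ t + Real.pi := csSup_le ⟨t, hup_ne⟩ fun b hb => hb.1.2
  have hαt : α ≤ t := csInf_le hdn_bdd hdn_ne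
  have hαge : t - Real.pi ≤ α := le_csInf ⟨t, hdn_ne⟩ fun a ha => ha.1.1
  have hupN : ∀ s ∈ Icc t β, s ∈ NR := by
    intro s hs
    rcases lt_or_eq_of_le hs.2 with h | h
    · obtain ⟨b, hb, hsb⟩ := exists_lt_of_lt_csSup ⟨t, hup_ne⟩ h
      exact hb.2 s ⟨hs.1, hsb.le⟩
    · rcases eq_or_lt_of_le hs.1 with h2 | h2
      · rw [← h2]; exact htN
      · -- s = β, t < β : closure argument
        have hsub : Ico t s ⊆ NR := by
          intro w hw
          obtain ⟨b, hb, hwb⟩ := exists_lt_of_lt_csSup ⟨t, hup_ne⟩ (h ▸ hw.2)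
          exact hb.2 w ⟨hw.1, hwb.le⟩
        have : s ∈ closure (Ico t s) := by
          rw [closure_Ico (ne_of_lt h2)]
          exact ⟨hs.1, le_refl s⟩
        exact hNRclosed.closure_subset (closure_mono hsub this)
  have hdnN : ∀ s ∈ Icc α t, s ∈ NR := by
    intro s hs
    rcases lt_or_eq_of_le hs.1 with h | h
    · obtain ⟨a, ha, hsa⟩ := exists_lt_of_csInf_lt ⟨t, hdn_ne⟩ h
      exact ha.2 s ⟨hsa.le, hs.2⟩
    · rcases eq_or_lt_of_le hs.2 with h2 | h2
      · rw [h2]; exact htN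
      · have hsub : Ioc s t ⊆ NR := by
          intro w hw
          obtain ⟨a, ha, hwa⟩ := exists_lt_of_csInf_lt ⟨t, hdn_ne⟩ (h ▸ hw.1)
          exact ha.2 w ⟨hwa.le, hw.2⟩
        have : s ∈ closure (Ioc s t) := by
          rw [closure_Ioc (ne_of_lt h2)]
          exact ⟨le_refl s, hs.2⟩
        exact hNRclosed.closure_subset (closure_mono hsub this)
  have hβlt : β < t + Real.pi := by
    rcases lt_or_eq_of_le hβle with h | h
    · exact h
    · exfalso
      exact anti_notin_NN hrπ ht (hupN (t + Real.pi) ⟨by linarith, h.ge⟩)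
  have hαgt : t - Real.pi < α := by
    rcases lt_or_eq_of_le hαge with h | h
    · exact h
    · exfalso
      have : ((t - Real.pi : ℝ) : S1) ∈ NN r Θ := hdnN (t - Real.pi) ⟨h.ge, by linarith⟩
      have heq : ((t - Real.pi : ℝ) : S1) = ((t + Real.pi : ℝ) : S1) := by
        rw [S1.coe_eq_coe_iff]
        exact ⟨1, by push_cast; ring⟩
      rw [heq] at this
      exact anti_notin_NN hrπ ht this
  refine ⟨α, β, hαt, htβ, hαgt, hβlt, ?_, ?_⟩
  · intro s hs
    rcases le_total s t with h | h
    · exact hdnN s ⟨hs.1, h⟩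
    · exact hupN s ⟨h, hs.2⟩
  · -- maximal containment
    intro a b hab hblt hbN htmem
    obtain ⟨s₀, hs₀, hs₀t⟩ := htmem
    obtain ⟨m, hm⟩ := S1.coe_eq_coe_iff.mp hs₀t
    -- t = s₀ + 2π m
    have hshift := S1.image_Icc_shift a b m
    set a' := a + 2 * Real.pi * m with ha'
    set b' := b + 2 * Real.pi * m with hb'
    have hta : a' ≤ t := by
      have : s₀ + 2 * Real.pi * m = t := by linarith
      rw [← this]
      simp only [ha']
      linarith [hs₀.1]
    have htb : t ≤ b' := by
      have : s₀ + 2 * Real.pi * m = t := by linarith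
      rw [← this]
      simp only [hb']
      linarith [hs₀.2]
    have hb'N : ∀ s ∈ Icc a' b', s ∈ NR := by
      intro s hs
      have h1 : s - 2 * Real.pi * m ∈ Icc a b := ⟨by simp only [ha'] at hs; linarith [hs.1],
        by simp only [hb'] at hs; linarith [hs.2]⟩
      have h2 : ((s - 2 * Real.pi * m : ℝ) : S1) = (s : S1) := by
        rw [S1.coe_eq_coe_iff]; exact ⟨m, by ring⟩
      have := hbN _ h1
      rwa [h2] at this
    have hb'β : b' ≤ β := by
      have hb'lt : b' < t + Real.pi := by
        by_contra hc
        push_neg at hc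
        have : (t + Real.pi) ∈ Icc a' b' := ⟨by linarith, hc⟩
        exact anti_notin_NN hrπ ht (hb'N _ this)
      refine le_csSup hup_bdd ⟨⟨htb, hb'lt.le⟩, fun s hs => hb'N s ⟨le_trans hta hs.1, hs.2⟩⟩
    have ha'α : α ≤ a' := by
      have ha'gt : t - Real.pi < a' := by
        by_contra hc
        push_neg at hc
        have : (t - Real.pi) ∈ Icc a' b' := ⟨hc, by linarith⟩
        have h3 := hb'N _ this
        have heq : ((t - Real.pi : ℝ) : S1) = ((t + Real.pi : ℝ) : S1) := by
          rw [S1.coe_eq_coe_iff]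
          exact ⟨1, by push_cast; ring⟩
        rw [mem_setOf_eq, heq] at h3
        exact anti_notin_NN hrπ ht h3
      refine csInf_le hdn_bdd ⟨⟨ha'gt.le, hta⟩, fun s hs => hb'N s ⟨hs.1, le_trans hs.2 htb⟩⟩
    rw [hshift]
    exact image_mono (Icc_subset_Icc ha'α hb'β)


/-- every Θ-point lies on an arc which absorbs every admissible closed arc through the point -/
lemma arc_through (hrπ : r < Real.pi) (hfin : Θ.Finite) (hdiam : Metric.diam Θ ≤ r) (x : S1) (hx : x ∈ Θ) :
    ∃ A : Set S1, IsArc r Θ A ∧ x ∈ A ∧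
      (∀ B : Set S1, IsClosedArc B → (∀ z ∈ B, ¬ ExcludedBy r Θ z) → x ∈ B → B ⊆ A) := by
  obtain ⟨t, htx, -, -⟩ := S1.exists_lift x 0
  rw [← htx] at hx
  obtain ⟨α, β, h1, h2, h3, h4, h5, h6⟩ := exists_good_arc hrπ hfin hdiam hx
  set A := (fun t : ℝ => (t : S1)) '' Icc α β with hA
  have hxA : x ∈ A := ⟨t, ⟨h1, h2⟩, htx⟩
  have hANN : ∀ z ∈ A, z ∈ NN r Θ := by
    rintro z ⟨s, hs, rfl⟩
    exact h5 s hs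
  have habsorb : ∀ B : Set S1, IsClosedArc B → (∀ z ∈ B, ¬ ExcludedBy r Θ z) → x ∈ B → B ⊆ A := by
    intro B hB hBN hxB
    obtain ⟨a, b, hab, hblt, rfl⟩ := hB
    refine h6 a b hab hblt ?_ (htx ▸ hxB)
    intro s hs
    exact mem_NN_iff.mpr (hBN _ ⟨s, hs, rfl⟩)
  refine ⟨A, ⟨⟨α, β, le_trans h1 h2, by linarith, rfl⟩, ⟨x, hxA, htx ▸ hx⟩, ?_, ?_⟩, hxA, habsorb⟩
  · intro z hz
    exact mem_NN_iff.mp (hANN z hz)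
  · intro B hB hBne hBN hAB
    exact (le_antisymm (habsorb B hB hBN (hAB hxA)) hAB).symm
    -- A ⊆ B and B ⊆ A

/-- uniqueness of the arc through a Θ-point -/
lemma arc_unique (hrπ : r < Real.pi) (hfin : Θ.Finite) (hdiam : Metric.diam Θ ≤ r) {A A' : Set S1} (hA : IsArc r Θ A) (hA' : IsArc r Θ A')
    {x : S1} (hx : x ∈ Θ) (hxA : x ∈ A) (hxA' : x ∈ A') : A = A' := by
  obtain ⟨C, hC, hxC, habs⟩ := arc_through hrπ hfin hdiam x hx
  have h1 : A = C := hA.2.2.2 C hC.1 hC.2.1 hC.2.2.1 (habs A hA.1 hA.2.2.1 hxA)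
  have h2 : A' = C := hA'.2.2.2 C hC.1 hC.2.1 hC.2.2.1 (habs A' hA'.1 hA'.2.2.1 hxA')
  rw [h1, h2]

/-- arcs are subsets of NN -/
lemma arc_sub_NN {A : Set S1} (hA : IsArc r Θ A) : A ⊆ NN r Θ := by
  intro z hz
  exact mem_NN_iff.mpr (hA.2.2.1 z hz)

/-- the set of arcs is finite -/
lemma arcs_finite (hrπ : r < Real.pi) (hfin : Θ.Finite) (hdiam : Metric.diam Θ ≤ r) : {A : Set S1 | IsArc r Θ A}.Finite := by
  classical
  set F : S1 → Set S1 := fun x => if h : x ∈ Θ then (arc_through hrπ hfin hdiam x h).choose else ∅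
    with hF
  apply Set.Finite.subset (hfin.image F)
  intro A hA
  obtain ⟨x, hxA, hxΘ⟩ := hA.2.1
  have hspec := (arc_through hrπ hfin hdiam x hxΘ).choose_spec
  refine ⟨x, hxΘ, ?_⟩
  rw [hF]
  simp only [dif_pos hxΘ]
  exact arc_unique hrπ hfin hdiam hspec.1 hA hxΘ hspec.2.1 hxA

/-- a point of the circle cannot be in NN together with a point of Θ at distance π -/
lemma pi_gap (hrπ : r < Real.pi) {z : S1} (hz : z ∈ NN r Θ) {ψ : S1} (hψ : ψ ∈ Θ)
    {u v : ℝ} (hu : (u : S1) = ψ) (hv : (v : S1) = z) (huv : ∃ m : ℤ, v - u = Real.pi + 2 * Real.pi * m) :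
    False := by
  obtain ⟨m, hm⟩ := huv
  have h1 : ((u + Real.pi : ℝ) : S1) = (v : S1) := by
    rw [S1.coe_eq_coe_iff]
    exact ⟨m, by linarith⟩
  have h2 : dist ψ z ≤ r := hz ψ hψ
  rw [← hu, ← hv, ← h1, S1.dist_pi u (u + Real.pi) (by ring)] at h2
  linarith


lemma int_zero {M : ℤ} (h : |2 * Real.pi * M| < 2 * Real.pi) : (M : ℝ) = 0 := by
  have hp : (0:ℝ) < 2 * Real.pi := by positivity
  have h2 : |(M:ℝ)| < 1 := by
    rw [abs_mul, abs_of_pos hp] at h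
    nlinarith [abs_nonneg (M:ℝ)]
  have : M = 0 := by
    have h3 : |(M:ℝ)| < ((1:ℤ):ℝ) := by push_cast; exact h2
    have h4 : |M| < 1 := by exact_mod_cast h3
    rcases abs_lt.mp h4 with ⟨h5, h6⟩
    omega
  exact_mod_cast this

lemma int_one {M : ℤ} (h1 : 0 < 2 * Real.pi * M) (h2 : 2 * Real.pi * M < 4 * Real.pi) :
    (M : ℝ) = 1 := by
  have hp : (0:ℝ) < 2 * Real.pi := by positivity
  have hM0 : (0:ℝ) < M := by nlinarith
  have hM2 : (M:ℝ) < 2 := by nlinarith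
  have : M = 1 := by
    have h3 : (0:ℤ) < M := by exact_mod_cast hM0
    have h4 : M < 2 := by exact_mod_cast hM2
    omega
  exact_mod_cast this

/-- red point of a Θ-point is not in NN -/
lemma red_not_NN (hrπ : r < Real.pi) {ψ : S1} (hψ : ψ ∈ Θ) :
    ψ + ((Real.pi : ℝ) : S1) ∉ NN r Θ := by
  obtain ⟨t, ht, -, -⟩ := S1.exists_lift ψ 0
  intro h
  refine pi_gap hrπ h hψ ht (v := t + Real.pi) ?_ ⟨0, by ring⟩
  rw [AddCircle.coe_add, ht]

/-- THE core geometric lemma for part (ii). -/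
lemma core (hrπ : r < Real.pi) (hfin : Θ.Finite) (hdiam : Metric.diam Θ ≤ r)
    {x y : S1} (hx : x ∈ Θ) (hy : y ∈ Θ)
    {Ax Ay : Set S1} (hAx : IsArc r Θ Ax) (hAy : IsArc r Θ Ay)
    (hxAx : x ∈ Ax) (hyAy : y ∈ Ay) (hAxy : Ax ≠ Ay)
    {a b : ℝ} (ha : (a : S1) = x) (hb : (b : S1) = y) (hab : a < b)
    (hblt : b < a + 2 * Real.pi) :
    ∃ C : Set S1, IsArc r Θ C ∧ ∀ z, z ∈ C → z ∈ Θ →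
      ∃ w ∈ Ioo a b, ((w : ℝ) : S1) = z + ((Real.pi : ℝ) : S1) := by
  classical
  have hπ := Real.pi_pos
  have hr0' : 0 ≤ r := le_trans (Metric.diam_nonneg) hdiam
  -- window lifts centered at a
  have hτ : ∀ ψ, ψ ∈ Θ → ∃ t : ℝ, (t : S1) = ψ ∧ |t - a| ≤ r := by
    intro ψ hψ
    obtain ⟨t, ht1, ht2, ht3⟩ := S1.exists_lift ψ a
    refine ⟨t, ht1, ?_⟩
    rw [← ht3]
    calc dist (a : S1) ψ = dist x ψ := by rw [ha]
      _ ≤ r := le_trans (Metric.dist_le_diam_of_mem hfin.isBounded hx hψ) hdiam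
  choose τ hτcoe hτbd using hτ
  set g : S1 → ℝ := fun ψ => if h : ψ ∈ Θ then τ ψ h else 0 with hg
  obtain ⟨φp, hφpF, hφpmin'⟩ :=
    hfin.toFinset.exists_min_image g ⟨x, hfin.mem_toFinset.mpr hx⟩
  have hφpΘ : φp ∈ Θ := hfin.mem_toFinset.mp hφpF
  set wp := τ φp hφpΘ with hwp
  have hφpmin : ∀ ψ (hψ : ψ ∈ Θ), wp ≤ τ ψ hψ := by
    intro ψ hψ
    have h := hφpmin' ψ (hfin.mem_toFinset.mpr hψ)
    simp only [hg, dif_pos hφpΘ, dif_pos hψ] at h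
    exact h

  obtain ⟨C, hC, hφpC, -⟩ := arc_through hrπ hfin hdiam φp hφpΘ
  have hdiamΘ : ∀ (p q : S1), p ∈ Θ → q ∈ Θ → dist p q ≤ r := fun p q hp hq =>
    le_trans (Metric.dist_le_diam_of_mem hfin.isBounded hp hq) hdiam
  have hstrict : ∀ (p q : S1), p ∈ Θ → q ∈ Θ → ∀ s t : ℝ,
      (s:S1) = p → (t:S1) = q → |s - t| ≠ Real.pi := by
    intro p q hp hq s t hs ht habs
    have h1 := hdiamΘ p q hp hq
    rw [← hs, ← ht, S1.dist_coe_eq habs.le, habs] at h1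
    linarith
  have hvne : τ y hy ≠ a := by
    intro h
    have hyx : y = x := by rw [← hτcoe y hy, h, ha]
    have hyAx : y ∈ Ax := by rw [hyx]; exact hxAx
    exact hAxy (arc_unique hrπ hfin hdiam hAx hAy hy hyAx hyAy)
  obtain ⟨a₀, b₀, hab₀, hlt₀, hCEq⟩ := hC.1
  have hCN : C ⊆ NN r Θ := arc_sub_NN hC
  refine ⟨C, hC, ?_⟩
  intro z hzC hzΘ
  set u := τ z hzΘ with hu
  set v := τ y hy with hv
  have huwp : wp ≤ u := hφpmin z hzΘ
  have hub := abs_le.mp (hτbd z hzΘ)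
  have hvb := abs_le.mp (hτbd y hy)
  have hwpb := abs_le.mp (hτbd φp hφpΘ)
  obtain ⟨ζ, hζmem, hζeq⟩ : ∃ ζ ∈ Icc a₀ b₀, ((ζ:ℝ):S1) = z := by
    have h := hzC; rw [hCEq] at h; obtain ⟨ζ, h1, h2⟩ := h; exact ⟨ζ, h1, h2⟩
  obtain ⟨ξ, hξmem, hξeq⟩ : ∃ ξ ∈ Icc a₀ b₀, ((ξ:ℝ):S1) = φp := by
    have h := hφpC; rw [hCEq] at h; obtain ⟨ξ, h1, h2⟩ := h; exact ⟨ξ, h1, h2⟩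
  obtain ⟨m₁, hm₁⟩ := S1.coe_eq_coe_iff.mp (hζeq.trans (hτcoe z hzΘ).symm)
  obtain ⟨m₂, hm₂⟩ := S1.coe_eq_coe_iff.mp (hξeq.trans (hτcoe φp hφpΘ).symm)
  -- hm₁ : u - ζ = 2π m₁ ; hm₂ : wp - ξ = 2π m₂
  have hG1 : ∀ ψ (hψ : ψ ∈ Θ), τ ψ hψ ∉ Ioo (wp + Real.pi) (u + Real.pi) ∧
      τ ψ hψ ∉ Ioo (wp - Real.pi) (u - Real.pi) := by
    rcases le_or_gt ξ ζ with hle | hltc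
    · have hM0 : ζ - ξ = u - wp := by
        have hMex : (ζ - ξ) - (u - wp) = 2 * Real.pi * (((-m₁ + m₂ : ℤ)) : ℝ) := by
          push_cast; linarith
        have h1 : ζ - ξ < 2 * Real.pi := by
          have := hζmem.2; have := hξmem.1; linarith
        have h2 : 0 ≤ u - wp := by linarith
        have h3 : u - wp ≤ 2 * r := by linarith [hub.1, hub.2, hwpb.1, hwpb.2]
        have h4 : ((-m₁ + m₂ : ℤ) : ℝ) = 0 := by
          refine int_zero ?_
          rw [← hMex, abs_lt]
          constructor
          · linarith [hle, hrπ]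
          · linarith [h1, h2]
        rw [h4, mul_zero] at hMex
        linarith
      intro ψ hψ
      constructor
      · rintro ⟨hlo, hhi⟩
        set s := τ ψ hψ - Real.pi + (ξ - wp) with hs
        have hsmem : s ∈ Icc a₀ b₀ := by
          constructor
          · have : ξ ≤ s := by rw [hs]; linarith
            linarith [hξmem.1]
          · have : s ≤ ζ := by rw [hs]; linarith
            linarith [hζmem.2]
        have hsN : ((s:ℝ):S1) ∈ NN r Θ := hCN (by rw [hCEq]; exact ⟨s, hsmem, rfl⟩)
        exact pi_gap hrπ hsN hψ (hτcoe ψ hψ) rfl ⟨-1 - m₂, by push_cast; linarith⟩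
      · rintro ⟨hlo, hhi⟩
        set s := τ ψ hψ + Real.pi + (ξ - wp) with hs
        have hsmem : s ∈ Icc a₀ b₀ := by
          constructor
          · have : ξ ≤ s := by rw [hs]; linarith
            linarith [hξmem.1]
          · have : s ≤ ζ := by rw [hs]; linarith
            linarith [hζmem.2]
        have hsN : ((s:ℝ):S1) ∈ NN r Θ := hCN (by rw [hCEq]; exact ⟨s, hsmem, rfl⟩)
        exact pi_gap hrπ hsN hψ (hτcoe ψ hψ) rfl ⟨-m₂, by push_cast; linarith⟩
    · exfalso
      have hM1 : ξ - ζ = wp - u + 2 * Real.pi := by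
        have hMex : (ξ - ζ) - (wp - u) = 2 * Real.pi * (((m₁ - m₂ : ℤ)) : ℝ) := by
          push_cast; linarith
        have h1 : ξ - ζ < 2 * Real.pi := by
          have := hξmem.2; have := hζmem.1; linarith
        have h2 : wp - u ≤ 0 := by linarith
        have h3 : -(2*r) ≤ wp - u := by linarith [hub.1, hub.2, hwpb.1, hwpb.2]
        have h4 : ((m₁ - m₂ : ℤ) : ℝ) = 1 := by
          refine int_one ?_ ?_
          · rw [← hMex]; linarith [hltc, h2]
          · rw [← hMex]; linarith [h1, h3, hrπ]
        rw [h4, mul_one] at hMex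
        linarith
      set s := ζ + (a + Real.pi - u) with hs
      have hsmem : s ∈ Icc a₀ b₀ := by
        constructor
        · have : ζ ≤ s := by rw [hs]; linarith [hub.2]
          linarith [hζmem.1]
        · have : s ≤ ξ := by rw [hs]; linarith [hwpb.1]
          linarith [hξmem.2]
      have hsN : ((s:ℝ):S1) ∈ NN r Θ := hCN (by rw [hCEq]; exact ⟨s, hsmem, rfl⟩)
      exact pi_gap hrπ hsN hx ha rfl ⟨-m₁, by push_cast; linarith⟩
  -- case analysis on v vs a
  rcases lt_trichotomy v a with hva | hva | hva
  · -- v < a : b = v + 2π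
    have hwit : ∃ ψh, ∃ hψh : ψh ∈ Θ, v + Real.pi < τ ψh hψh := by
      by_contra hcon
      push_neg at hcon
      have hKN : ∀ s ∈ Icc v a, ((s:ℝ):S1) ∈ NN r Θ := by
        intro s hsm ψ hψ
        have hψb := abs_le.mp (hτbd ψ hψ)
        have h1 : τ ψ hψ - v ≤ r := by
          obtain ⟨t, ht1, ht2, ht3⟩ := S1.exists_lift ψ v
          have htr : |t - v| ≤ r := by
            rw [← ht3, show ((v:ℝ):S1) = y from hτcoe y hy]
            exact hdiamΘ y ψ hy hψ
          have htr' := abs_le.mp htr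
          obtain ⟨m, hm⟩ := S1.coe_eq_coe_iff.mp (ht1.trans (hτcoe ψ hψ).symm)
          have hm0 : ((m:ℤ):ℝ) = 0 := by
            refine int_zero ?_
            rw [← hm, abs_lt]
            constructor
            · have := hcon ψ hψ; linarith
            · have := hcon ψ hψ; linarith
          rw [hm0, mul_zero] at hm
          linarith
        calc dist ψ ((s:ℝ):S1) = dist ((τ ψ hψ : ℝ):S1) ((s:ℝ):S1) := by rw [hτcoe]
          _ ≤ |τ ψ hψ - s| := S1.dist_coe_le _ _
          _ ≤ r := abs_le.mpr ⟨by linarith [hsm.2, hψb.1], by linarith [hsm.1, h1]⟩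
      obtain ⟨Cx, hCx, hxCx, habsx⟩ := arc_through hrπ hfin hdiam x hx
      have hK : (fun t : ℝ => (t:S1)) '' Icc v a ⊆ Cx := by
        refine habsx _ ⟨v, a, hva.le, by linarith, rfl⟩ ?_ ⟨a, ⟨hva.le, le_refl a⟩, ha⟩
        rintro z' ⟨s, hsm, rfl⟩
        exact mem_NN_iff.mp (hKN s hsm)
      have hyAx : y ∈ Ax := by
        rw [← arc_unique hrπ hfin hdiam hCx hAx hx hxCx hxAx]
        exact hK ⟨v, ⟨le_refl v, hva.le⟩, hτcoe y hy⟩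
      exact hAxy (arc_unique hrπ hfin hdiam hAx hAy hy hyAx hyAy)
    obtain ⟨ψh, hψhΘ, hψhgt⟩ := hwit
    obtain ⟨mb, hmb⟩ := S1.coe_eq_coe_iff.mp ((hτcoe y hy).trans hb.symm)
    -- hmb : b - v = 2π mb
    have hmb1 : ((mb:ℤ):ℝ) = 1 := by
      refine int_one ?_ ?_
      · rw [← hmb]; linarith
      · rw [← hmb]; linarith [hvb.1]
    have hbv : b = v + 2 * Real.pi := by
      have := hmb; rw [hmb1, mul_one] at this; linarith
    have hfin1 : u < v + Real.pi := by
      by_contra hcon2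
      push_neg at hcon2
      have hne2 : |u - v| ≠ Real.pi := hstrict z y hzΘ hy u v (hτcoe z hzΘ) (hτcoe y hy)
      have hlt2 : v + Real.pi < u := by
        rcases lt_or_eq_of_le hcon2 with h | h
        · exact h
        · exfalso; apply hne2; rw [← h]; rw [abs_of_pos] <;> linarith
      have hwpv : wp ≤ v := hφpmin y hy
      exact (hG1 y hy).2 ⟨by linarith, by linarith⟩
    refine ⟨u + Real.pi, ⟨by linarith [hub.1], by linarith⟩, ?_⟩
    rw [AddCircle.coe_add, hτcoe z hzΘ]
  · exact absurd hva hvne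
  · -- v > a : b = v
    have hwit : ∃ ψh, ∃ hψh : ψh ∈ Θ, τ ψh hψh < v - Real.pi := by
      by_contra hcon
      push_neg at hcon
      have hKN : ∀ s ∈ Icc a v, ((s:ℝ):S1) ∈ NN r Θ := by
        intro s hsm ψ hψ
        have hψb := abs_le.mp (hτbd ψ hψ)
        have h1 : v - τ ψ hψ ≤ r := by
          obtain ⟨t, ht1, ht2, ht3⟩ := S1.exists_lift ψ v
          have htr : |t - v| ≤ r := by
            rw [← ht3, show ((v:ℝ):S1) = y from hτcoe y hy]
            exact hdiamΘ y ψ hy hψ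
          have htr' := abs_le.mp htr
          obtain ⟨m, hm⟩ := S1.coe_eq_coe_iff.mp (ht1.trans (hτcoe ψ hψ).symm)
          have hm0 : ((m:ℤ):ℝ) = 0 := by
            refine int_zero ?_
            rw [← hm, abs_lt]
            constructor
            · have := hcon ψ hψ; linarith
            · have := hcon ψ hψ; linarith
          rw [hm0, mul_zero] at hm
          linarith
        calc dist ψ ((s:ℝ):S1) = dist ((τ ψ hψ : ℝ):S1) ((s:ℝ):S1) := by rw [hτcoe]
          _ ≤ |τ ψ hψ - s| := S1.dist_coe_le _ _
          _ ≤ r := abs_le.mpr ⟨by linarith [hsm.2, h1], by linarith [hsm.1, hψb.2]⟩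
      obtain ⟨Cx, hCx, hxCx, habsx⟩ := arc_through hrπ hfin hdiam x hx
      have hK : (fun t : ℝ => (t:S1)) '' Icc a v ⊆ Cx := by
        refine habsx _ ⟨a, v, hva.le, by linarith [hvb.2], rfl⟩ ?_ ⟨a, ⟨le_refl a, hva.le⟩, ha⟩
        rintro z' ⟨s, hsm, rfl⟩
        exact mem_NN_iff.mp (hKN s hsm)
      have hyAx : y ∈ Ax := by
        rw [← arc_unique hrπ hfin hdiam hCx hAx hx hxCx hxAx]
        exact hK ⟨v, ⟨hva.le, le_refl v⟩, hτcoe y hy⟩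
      exact hAxy (arc_unique hrπ hfin hdiam hAx hAy hy hyAx hyAy)
    obtain ⟨ψh, hψhΘ, hψhlt⟩ := hwit
    obtain ⟨mb, hmb⟩ := S1.coe_eq_coe_iff.mp ((hτcoe y hy).trans hb.symm)
    have hmb0 : ((mb:ℤ):ℝ) = 0 := by
      refine int_zero ?_
      rw [← hmb, abs_lt]
      constructor
      · linarith [hvb.2]
      · linarith
    have hbv : b = v := by
      have := hmb; rw [hmb0, mul_zero] at this; linarith
    have hfin1 : u + Real.pi < v := by
      by_contra hcon2
      push_neg at hcon2
      have hne2 : |u - v| ≠ Real.pi := hstrict z y hzΘ hy u v (hτcoe z hzΘ) (hτcoe y hy)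
      have hlt2 : v < u + Real.pi := by
        rcases lt_or_eq_of_le hcon2 with h | h
        · exact h
        · exfalso; apply hne2; rw [h]; rw [abs_of_neg] <;> linarith
      have hwph : wp ≤ τ ψh hψhΘ := hφpmin ψh hψhΘ
      exact (hG1 y hy).1 ⟨by linarith, hlt2⟩
    refine ⟨u + Real.pi, ⟨by linarith [hub.1], by linarith [hbv]⟩, ?_⟩
    rw [AddCircle.coe_add, hτcoe z hzΘ]



lemma dist_red (ψ : S1) : dist ψ (ψ + ((Real.pi : ℝ) : S1)) = Real.pi := by
  obtain ⟨t, ht, -, -⟩ := S1.exists_lift ψ 0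
  rw [← ht, ← AddCircle.coe_add]
  exact S1.dist_pi t (t + Real.pi) (by ring)

lemma part_i (hrπ : r < Real.pi) (hfin : Θ.Finite) (hdiam : Metric.diam Θ ≤ r)
    {n : ℕ} (θ : Fin n → S1) (hinj : Function.Injective θ) (hmem : ∀ i, θ i ∈ Θ)
    (hAlt : AlternateColors (Set.range θ) ((fun x => x + ((Real.pi : ℝ) : S1)) '' Set.range θ)) :
    n ≤ arcsCount r Θ := by
  classical
  set Af : Fin n → Set S1 := fun i => (arc_through hrπ hfin hdiam (θ i) (hmem i)).choose with hAf
  have hAfspec : ∀ i, IsArc r Θ (Af i) ∧ θ i ∈ Af i := fun i =>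
    ⟨(arc_through hrπ hfin hdiam (θ i) (hmem i)).choose_spec.1,
     (arc_through hrπ hfin hdiam (θ i) (hmem i)).choose_spec.2.1⟩
  have hAfinj : Function.Injective Af := by
    intro i j hij
    by_contra hne
    have hij' : θ i ≠ θ j := fun h => hne (hinj h)
    have hθjAfi : θ j ∈ Af i := by rw [hij]; exact (hAfspec j).2
    obtain ⟨a₀, b₀, hab₀, hlt₀, hEq⟩ := (hAfspec i).1.1
    have hsubN : ∀ s ∈ Icc a₀ b₀, ((s:ℝ):S1) ∈ NN r Θ := fun s hs =>
      arc_sub_NN (hAfspec i).1 (by rw [hEq]; exact ⟨s, hs, rfl⟩)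
    obtain ⟨si, hsim, hsieq⟩ : ∃ s ∈ Icc a₀ b₀, ((s:ℝ):S1) = θ i := by
      have h := (hAfspec i).2; rw [hEq] at h; exact h
    obtain ⟨sj, hsjm, hsjeq⟩ : ∃ s ∈ Icc a₀ b₀, ((s:ℝ):S1) = θ j := by
      have h := hθjAfi; rw [hEq] at h; exact h
    have hsne : si ≠ sj := fun h => hij' (by rw [← hsieq, h, hsjeq])
    have key : ∀ p q : ℝ, p ∈ Icc a₀ b₀ → q ∈ Icc a₀ b₀ → p < q →
        ((p:ℝ):S1) ∈ Set.range θ → ((q:ℝ):S1) ∈ Set.range θ → ((p:ℝ):S1) ≠ ((q:ℝ):S1) → False := by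
      intro p q hp hq hpq hpB hqB hpqne
      have hOA : IsOpenArcFromTo ((p:ℝ):S1) ((q:ℝ):S1)
          ((fun t : ℝ => (t : S1)) '' Set.Ioo p q) :=
        ⟨p, q, rfl, rfl, hpq, by linarith [hp.1, hq.2], rfl⟩
      obtain ⟨c, hcW, hcR⟩ := hAlt.2.1 _ hpB _ hqB hpqne _ hOA
      obtain ⟨w, hw, hwc⟩ := hcW
      obtain ⟨_, ⟨l, rfl⟩, hc2⟩ := hcR
      have hcN : c ∈ NN r Θ := by
        rw [← hwc]
        exact hsubN w ⟨le_trans hp.1 hw.1.le, le_trans hw.2.le hq.2⟩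
      rw [← hc2] at hcN
      exact red_not_NN hrπ (hmem l) hcN
    rcases lt_or_gt_of_ne hsne with hlt | hlt
    · exact key si sj hsim hsjm hlt (hsieq ▸ ⟨i, rfl⟩) (hsjeq ▸ ⟨j, rfl⟩)
        (by rw [hsieq, hsjeq]; exact hij')
    · exact key sj si hsjm hsim hlt (hsjeq ▸ ⟨j, rfl⟩) (hsieq ▸ ⟨i, rfl⟩)
        (by rw [hsieq, hsjeq]; exact hij'.symm)
  have hsub : Set.range Af ⊆ {A : Set S1 | IsArc r Θ A} := by
    rintro _ ⟨i, rfl⟩; exact (hAfspec i).1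
  have hcard : (Set.range Af).ncard = n := by
    rw [← Set.image_univ, Set.ncard_image_of_injective _ hAfinj, Set.ncard_univ]
    simp
  calc n = (Set.range Af).ncard := hcard.symm
    _ ≤ arcsCount r Θ := Set.ncard_le_ncard hsub (arcs_finite hrπ hfin hdiam)

lemma part_ii (hrπ : r < Real.pi) (hfin : Θ.Finite) (hdiam : Metric.diam Θ ≤ r)
    {n : ℕ} (hn : arcsCount r Θ = n)
    (θ : Fin n → S1) (hθ : ∀ i, θ i ∈ Θ) (A : Fin n → Set S1) (hA : ∀ i, IsArc r Θ (A i))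
    (hAne : ∀ i j, i ≠ j → A i ≠ A j) (hmem : ∀ i, θ i ∈ A i) :
    AlternateColors (Set.range θ) ((fun x => x + ((Real.pi : ℝ) : S1)) '' Set.range θ) := by
  classical
  have hdiamΘ : ∀ (p q : S1), p ∈ Θ → q ∈ Θ → dist p q ≤ r := fun p q hp hq =>
    le_trans (Metric.dist_le_diam_of_mem hfin.isBounded hp hq) hdiam
  have hAinj : Function.Injective A := by
    intro i j h
    by_contra hne
    exact hAne i j hne h
  have hcover : ∀ B : Set S1, IsArc r Θ B → ∃ l, B = A l := by
    have hsub : Set.range A ⊆ {B : Set S1 | IsArc r Θ B} := by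
      rintro _ ⟨i, rfl⟩; exact hA i
    have hcard : (Set.range A).ncard = n := by
      rw [← Set.image_univ, Set.ncard_image_of_injective _ hAinj, Set.ncard_univ]
      simp
    have heq : Set.range A = {B : Set S1 | IsArc r Θ B} :=
      Set.eq_of_subset_of_ncard_le hsub (by rw [hcard]; exact hn.le)
        (arcs_finite hrπ hfin hdiam)
    intro B hB
    have : B ∈ Set.range A := by rw [heq]; exact hB
    obtain ⟨l, hl⟩ := this
    exact ⟨l, hl.symm⟩
  refine ⟨?_, ?_, ?_⟩
  · -- disjoint
    rw [Set.disjoint_left]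
    rintro p ⟨i, rfl⟩ ⟨q, ⟨j, rfl⟩, hq⟩
    have h1 : dist (θ j) (θ i) ≤ r := hdiamΘ _ _ (hθ j) (hθ i)
    rw [← hq, dist_red] at h1
    linarith
  · -- blue pairs
    intro x hx y hy hxy W hW
    obtain ⟨i, hi⟩ := hx
    obtain ⟨j, hj⟩ := hy
    have hij : i ≠ j := by rintro rfl; rw [hi] at hj; exact hxy hj
    obtain ⟨a, b, haeq, hbeq, hab, hblt, rfl⟩ := hW
    obtain ⟨C, hCarc, hCprop⟩ := core hrπ hfin hdiam (hi ▸ hθ i) (hj ▸ hθ j) (hA i) (hA j)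
      (hi ▸ hmem i) (hj ▸ hmem j) (hAne i j hij) haeq hbeq hab hblt
    obtain ⟨l, hl⟩ := hcover C hCarc
    obtain ⟨w, hw, hweq⟩ := hCprop (θ l) (by rw [hl]; exact hmem l) (hθ l)
    exact ⟨((w:ℝ):S1), ⟨w, hw, rfl⟩, ⟨θ l, ⟨l, rfl⟩, hweq.symm⟩⟩
  · -- red pairs
    intro x' hx' y' hy' hxy' W' hW'
    obtain ⟨p, ⟨i, rfl⟩, hpx⟩ := hx'
    obtain ⟨q, ⟨j, rfl⟩, hqy⟩ := hy'
    have hij : i ≠ j := by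
      rintro rfl
      apply hxy'
      rw [← hpx, ← hqy]
    obtain ⟨a', b', ha'eq, hb'eq, hab', hblt', rfl⟩ := hW'
    have hπ2 : ((2 * Real.pi : ℝ) : S1) = 0 := AddCircle.coe_period (2 * Real.pi)
    have ha2 : ((a' - Real.pi : ℝ) : S1) = θ i := by
      have h1 : ((a' - Real.pi : ℝ) : S1) + ((Real.pi : ℝ) : S1) = θ i + ((Real.pi : ℝ) : S1) := by
        rw [← AddCircle.coe_add]
        have h2 : a' - Real.pi + Real.pi = a' := by ring
        rw [h2, ha'eq]
        exact hpx.symm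
      exact add_right_cancel h1
    have hb2 : ((b' - Real.pi : ℝ) : S1) = θ j := by
      have h1 : ((b' - Real.pi : ℝ) : S1) + ((Real.pi : ℝ) : S1) = θ j + ((Real.pi : ℝ) : S1) := by
        rw [← AddCircle.coe_add]
        have h2 : b' - Real.pi + Real.pi = b' := by ring
        rw [h2, hb'eq]
        exact hqy.symm
      exact add_right_cancel h1
    obtain ⟨C, hCarc, hCprop⟩ := core hrπ hfin hdiam (hθ i) (hθ j) (hA i) (hA j)
      (hmem i) (hmem j) (hAne i j hij) ha2 hb2 (by linarith) (by linarith)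
    obtain ⟨l, hl⟩ := hcover C hCarc
    obtain ⟨w, hw, hweq⟩ := hCprop (θ l) (by rw [hl]; exact hmem l) (hθ l)
    refine ⟨((w + Real.pi : ℝ) : S1), ⟨w + Real.pi, ⟨by linarith [hw.1], by linarith [hw.2]⟩, rfl⟩,
      ⟨l, ?_⟩⟩
    rw [AddCircle.coe_add, hweq, add_assoc, ← AddCircle.coe_add]
    have : (Real.pi : ℝ) + Real.pi = 2 * Real.pi := by ring
    rw [this, hπ2, add_zero]

end Arcs
end ArcsProof

/-- Let `r ∈ [0,π)`, `k ≥ 0`, and `Θ ⊆ S¹` nonempty finite with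
`diam Θ ≤ r`.
(i) If there are distinct points `θ_0, …, θ_{2k} ∈ Θ` such that these blue points together
with their red antipodes are pairwise distinct and alternate in color in cyclic order,
then `arcs_r(Θ) ≥ 2k+1`.
(ii) Conversely, if `arcs_r(Θ) = 2k+1` and `θ_0, …, θ_{2k} ∈ Θ` lie in pairwise distinct
`(Θ,r)`-arcs, then the blue points together with their red antipodes alternate in color
in cyclic order. -/
theorem red_blue_points_and_arcs (r : ℝ) (hr0 : 0 ≤ r) (hrπ : r < Real.pi) (k : ℕ)
    (Θ : Set S1) (hne : Θ.Nonempty) (hfin : Θ.Finite) (hdiam : Metric.diam Θ ≤ r) :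
    ((∃ θ : Fin (2 * k + 1) → S1, Function.Injective θ ∧ (∀ i, θ i ∈ Θ) ∧
        AlternateColors (Set.range θ)
          ((fun x => x + ((Real.pi : ℝ) : S1)) '' Set.range θ)) →
      2 * k + 1 ≤ arcsCount r Θ) ∧
    (arcsCount r Θ = 2 * k + 1 →
      ∀ θ : Fin (2 * k + 1) → S1, (∀ i, θ i ∈ Θ) →
      ∀ A : Fin (2 * k + 1) → Set S1, (∀ i, IsArc r Θ (A i)) →
        (∀ i j, i ≠ j → A i ≠ A j) → (∀ i, θ i ∈ A i) →
        AlternateColors (Set.range θ)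
          ((fun x => x + ((Real.pi : ℝ) : S1)) '' Set.range θ)) := by
  constructor
  · rintro ⟨θ, hinj, hmem, hAlt⟩
    exact Arcs.part_i hrπ hfin hdiam θ hinj hmem hAlt
  · intro hn θ hθ A hA hAne hmem
    exact Arcs.part_ii hrπ hfin hdiam hn θ hθ A hA hAne hmem
end
end

section
/- For every r ∈ [0,π) and every k ≥ 0, the set W_{2k+1}(r) is closed in VRm(S¹;r). -/
open MeasureTheory Metric Filter
open scoped unitInterval

noncomputable section

/-- The set of atoms of a probability measure. -/
def suppSet {X : Type*} [MeasurableSpace X] (μ : ProbabilityMeasure X) : Set X :=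
  {x | μ {x} ≠ 0}

/-- Finitely supported Borel probability measures, topologized as a subspace of the
space of Borel probability measures with the topology of weak convergence. -/
abbrev Pfin (X : Type*) [MeasurableSpace X] : Type _ :=
  {μ : ProbabilityMeasure X // ∃ S : Finset X, μ (↑S : Set X) = 1}

/-- The Vietoris–Rips metric thickening of the circle at scale `r`:
finitely supported probability measures whose support has diameter at most `r`. -/
def VRm (r : ℝ) : Set (Pfin S1) :=
  {μ | Metric.diam (suppSet μ.1) ≤ r}


/-- `arcs_r(μ)` for a finitely supported measure: the number of `(supp μ, r)`-arcs. -/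
def arcsCountM (r : ℝ) (μ : Pfin S1) : ℕ :=
  arcsCount r (suppSet μ.1)

/-- `V_{2k+1}(r)`: measures in the metric thickening with exactly `2k+1` arcs. -/
def V (r : ℝ) (k : ℕ) : Set (Pfin S1) :=
  {μ ∈ VRm r | arcsCountM r μ = 2 * k + 1}

/-- `W_{2k+1}(r)`: measures in the metric thickening with at most `2k+1` arcs. -/
def W (r : ℝ) (k : ℕ) : Set (Pfin S1) :=
  {μ ∈ VRm r | arcsCountM r μ ≤ 2 * k + 1}
namespace WProof
open Set

lemma tp_pos : (0:ℝ) < 2 * Real.pi := by positivity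

lemma coe_eq_coe {a b : ℝ} : ((a : S1) = (b : S1)) ↔ ∃ k : ℤ, b = a + 2 * Real.pi * k := by
  rw [QuotientAddGroup.eq_iff_sub_mem, AddSubgroup.mem_zmultiples_iff]
  constructor
  · rintro ⟨k, hk⟩
    exact ⟨-k, by push_cast [zsmul_eq_mul] at hk ⊢; linarith⟩
  · rintro ⟨k, hk⟩
    exact ⟨-k, by push_cast [zsmul_eq_mul]; linarith⟩

lemma coe_add_tp (a : ℝ) : ((a + 2 * Real.pi : ℝ) : S1) = (a : S1) :=
  (coe_eq_coe.mpr ⟨1, by ring⟩).symm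

/-- unique lift in a window of length 2π -/
lemma lift_unique {z s t : ℝ} (hs : s ∈ Set.Ioo z (z + 2 * Real.pi))
    (ht : t ∈ Set.Ioo z (z + 2 * Real.pi)) (h : (s : S1) = (t : S1)) : s = t := by
  obtain ⟨k, hk⟩ := coe_eq_coe.mp h
  obtain ⟨hs1, hs2⟩ := hs; obtain ⟨ht1, ht2⟩ := ht
  have h2 : |(k:ℝ)| < 1 := by
    rw [abs_lt]
    constructor <;> nlinarith [Real.pi_pos]
  have hk0 : k = 0 := by
    have h3 := abs_lt.mp h2
    have : -1 < k ∧ k < 1 := by exact_mod_cast h3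
    omega
  subst hk0; simpa using hk.symm

/-- a lift of `x` close to `a`, provided `dist (a : S1) x` is small -/
lemma exists_lift_near (a : ℝ) (x : S1) {ε : ℝ} (h : dist (a : S1) x < ε) :
    ∃ t : ℝ, (t : S1) = x ∧ |a - t| < ε := by
  obtain ⟨u, rfl⟩ := QuotientAddGroup.mk_surjective x
  have hd : dist (a : S1) (u : S1) = ‖((a - u : ℝ) : S1)‖ := by
    rw [dist_eq_norm]
    norm_cast
  rw [AddCircle.norm_eq] at hd
  refine ⟨u + (round ((2 * Real.pi)⁻¹ * (a - u)) : ℤ) * (2 * Real.pi), ?_, ?_⟩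
  · exact coe_eq_coe.mpr ⟨-(round ((2 * Real.pi)⁻¹ * (a - u)) : ℤ), by push_cast; ring⟩
  · rw [hd] at h
    calc |a - (u + (round ((2 * Real.pi)⁻¹ * (a - u)) : ℤ) * (2 * Real.pi))|
        = |a - u - (round ((2 * Real.pi)⁻¹ * (a - u)) : ℤ) * (2 * Real.pi)| := by ring_nf
      _ < ε := h

lemma notExcluded_iff {r : ℝ} {Θ : Set S1} {x : S1} :
    ¬ ExcludedBy r Θ x ↔ ∀ θ ∈ Θ, dist θ x ≤ r := by
  unfold ExcludedBy; push_neg; rfl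

lemma shift_image (a b : ℝ) (k : ℤ) :
    (fun t : ℝ => (t : S1)) '' Set.Icc a b
      = (fun t : ℝ => (t : S1)) '' Set.Icc (a + 2*Real.pi*k) (b + 2*Real.pi*k) := by
  ext x
  simp only [Set.mem_image, Set.mem_Icc]
  constructor
  · rintro ⟨t, ht, rfl⟩
    exact ⟨t + 2*Real.pi*k, ⟨by linarith [ht.1], by linarith [ht.2]⟩,
      (coe_eq_coe.mpr ⟨k, rfl⟩).symm⟩
  · rintro ⟨t, ht, rfl⟩
    exact ⟨t - 2*Real.pi*k, ⟨by linarith [ht.1], by linarith [ht.2]⟩,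
      (coe_eq_coe.mpr ⟨-k, by push_cast; ring⟩).symm⟩

lemma relocate {A : Set S1} (hA : IsClosedArc A) (z : ℝ) (hz : (z : S1) ∉ A) :
    ∃ a b : ℝ, z < a ∧ a ≤ b ∧ b < z + 2 * Real.pi ∧
      A = (fun t : ℝ => (t : S1)) '' Set.Icc a b := by
  obtain ⟨a, b, hab, hlt, rfl⟩ := hA
  set k : ℤ := ⌈(a - z) / (2 * Real.pi)⌉ - 1 with hk
  have hceil1 : ((k : ℝ)) < (a - z) / (2 * Real.pi) := by
    have := Int.ceil_lt_add_one ((a - z) / (2 * Real.pi))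
    push_cast [hk]; linarith
  have hceil2 : (a - z) / (2 * Real.pi) ≤ (k : ℝ) + 1 := by
    have := Int.le_ceil ((a - z) / (2 * Real.pi))
    push_cast [hk]; linarith
  have hk1 : z + 2 * Real.pi * k < a := by
    have := (lt_div_iff₀ tp_pos).mp hceil1
    linarith
  have hk2 : a ≤ z + 2 * Real.pi * (k + 1) := by
    have := (div_le_iff₀ tp_pos).mp hceil2
    linarith
  have hk2' : a < z + 2 * Real.pi * (k + 1) := by
    rcases lt_or_eq_of_le hk2 with h | h
    · exact h
    · exfalso
      apply hz
      exact ⟨a, ⟨le_refl a, hab⟩, (coe_eq_coe.mpr ⟨k + 1, by push_cast; linarith⟩).symm⟩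
  have hb' : b - 2 * Real.pi * k < z + 2 * Real.pi := by
    by_contra hcon
    push_neg at hcon
    apply hz
    refine ⟨z + 2 * Real.pi * (k+1), ⟨by linarith, by push_cast at hcon ⊢; linarith⟩, ?_⟩
    exact (coe_eq_coe.mpr ⟨k + 1, by push_cast; ring⟩).symm
  refine ⟨a - 2 * Real.pi * k, b - 2 * Real.pi * k, by linarith, by linarith, hb', ?_⟩
  have := shift_image a b (-k)
  convert this using 3 <;> push_cast <;> ring

lemma mem_window_lift {a b z t : ℝ} (hza : z < a) (hbz : b < z + 2 * Real.pi)
    (htz : t ∈ Set.Ioo z (z + 2 * Real.pi))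
    (h : (t : S1) ∈ (fun t : ℝ => (t : S1)) '' Set.Icc a b) : t ∈ Set.Icc a b := by
  obtain ⟨s, hs, hst⟩ := h
  have : s = t := lift_unique ⟨lt_of_lt_of_le hza hs.1, lt_of_le_of_lt hs.2 hbz⟩ htz hst
  rwa [← this]

lemma notExcludedSet_closed (r : ℝ) (Θ : Set S1) :
    IsClosed {x : S1 | ¬ ExcludedBy r Θ x} := by
  have : {x : S1 | ¬ ExcludedBy r Θ x} = ⋂ θ ∈ Θ, {x | dist θ x ≤ r} := by
    ext x; simp [notExcluded_iff]
  rw [this]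
  exact isClosed_biInter fun θ _ =>
    isClosed_le (Continuous.dist continuous_const continuous_id) continuous_const

lemma exists_maximal_arc (r : ℝ) (Θ : Set S1) (z p : ℝ)
    (hz : ExcludedBy r Θ (z : S1)) (hp : p ∈ Set.Ioo z (z + 2 * Real.pi))
    (hpΘ : (p : S1) ∈ Θ) (hpN : ¬ ExcludedBy r Θ ((p : S1))) :
    ∃ A : Set S1, IsArc r Θ A ∧ (p : S1) ∈ A := by
  set N' : Set ℝ :=
    Set.Icc z (z + 2 * Real.pi) ∩ ((fun t : ℝ => (t : S1)) ⁻¹' {x | ¬ ExcludedBy r Θ x})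
    with hN'
  have hN'cl : IsClosed N' :=
    isClosed_Icc.inter ((notExcludedSet_closed r Θ).preimage (AddCircle.continuous_mk' _))
  have hpN' : p ∈ N' := ⟨⟨le_of_lt hp.1, le_of_lt hp.2⟩, hpN⟩
  set SL : Set ℝ := {t | t ≤ p ∧ Set.Icc t p ⊆ N'} with hSL
  set SR : Set ℝ := {t | p ≤ t ∧ Set.Icc p t ⊆ N'} with hSR
  have hpSL : p ∈ SL := ⟨le_refl p, by rw [Set.Icc_self]; simpa using hpN'⟩
  have hpSR : p ∈ SR := ⟨le_refl p, by rw [Set.Icc_self]; simpa using hpN'⟩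
  have hSLbdd : ∀ t ∈ SL, z ≤ t := fun t ht => (ht.2 ⟨le_refl t, ht.1⟩).1.1
  have hSRbdd : ∀ t ∈ SR, t ≤ z + 2 * Real.pi := fun t ht => (ht.2 ⟨ht.1, le_refl t⟩).1.2
  set a := sInf SL with ha
  set b := sSup SR with hb
  have ha_le : a ≤ p := csInf_le ⟨z, hSLbdd⟩ hpSL
  have hb_ge : p ≤ b := le_csSup ⟨z + 2 * Real.pi, hSRbdd⟩ hpSR
  have hIccL : Set.Icc a p ⊆ N' := by
    have hIoc : Set.Ioc a p ⊆ N' := by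
      intro t ht
      obtain ⟨s, hsSL, hst⟩ := exists_lt_of_csInf_lt ⟨p, hpSL⟩ ht.1
      exact hsSL.2 ⟨le_of_lt hst, ht.2⟩
    have haN : a ∈ N' := by
      rcases eq_or_lt_of_le ha_le with h | h
      · rw [h]; exact hpN'
      · have h1 : a ∈ closure (Set.Ioc a p) := by
          rw [closure_Ioc (ne_of_lt h)]; exact ⟨le_refl a, le_of_lt h⟩
        exact closure_minimal hIoc hN'cl h1
    intro t ht
    rcases eq_or_lt_of_le ht.1 with h | h
    · rwa [← h]
    · exact hIoc ⟨h, ht.2⟩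
  have hIccR : Set.Icc p b ⊆ N' := by
    have hIco : Set.Ico p b ⊆ N' := by
      intro t ht
      obtain ⟨s, hsSR, hst⟩ := exists_lt_of_lt_csSup ⟨p, hpSR⟩ ht.2
      exact hsSR.2 ⟨ht.1, le_of_lt hst⟩
    have hbN : b ∈ N' := by
      rcases eq_or_lt_of_le hb_ge with h | h
      · rw [← h]; exact hpN'
      · have h1 : b ∈ closure (Set.Ico p b) := by
          rw [closure_Ico (ne_of_lt h)]; exact ⟨le_of_lt h, le_refl b⟩
        exact closure_minimal hIco hN'cl h1
    intro t ht
    rcases eq_or_lt_of_le ht.2 with h | h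
    · rwa [h]
    · exact hIco ⟨ht.1, h⟩
  have hIcc : ∀ t ∈ Set.Icc a b, t ∈ N' := by
    intro t ht
    rcases le_total t p with h | h
    · exact hIccL ⟨ht.1, h⟩
    · exact hIccR ⟨h, ht.2⟩
  have haz : z < a := by
    rcases eq_or_lt_of_le (hIccL ⟨le_refl a, ha_le⟩).1.1 with h | h
    · exfalso; exact (hIccL ⟨le_refl a, ha_le⟩).2 (by rw [← h]; exact hz)
    · exact h
  have hbz : b < z + 2 * Real.pi := by
    rcases eq_or_lt_of_le (hIccR ⟨hb_ge, le_refl b⟩).1.2 with h | h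
    · exfalso
      apply (hIccR ⟨hb_ge, le_refl b⟩).2
      show ExcludedBy r Θ ((b : ℝ) : S1)
      rw [show ((b : ℝ) : S1) = ((z : ℝ) : S1) by rw [h]; exact coe_add_tp z]
      exact hz
    · exact h
  refine ⟨(fun t : ℝ => (t : S1)) '' Set.Icc a b, ⟨⟨a, b, le_trans ha_le hb_ge, by linarith, rfl⟩,
    ⟨(p : S1), ⟨p, ⟨ha_le, hb_ge⟩, rfl⟩, hpΘ⟩, ?_, ?_⟩, ⟨p, ⟨ha_le, hb_ge⟩, rfl⟩⟩
  · rintro x ⟨t, ht, rfl⟩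
    exact (hIcc t ht).2
  · intro B hB hBΘ hBN hAB
    have hzB : (z : S1) ∉ B := fun h => hBN _ h hz
    obtain ⟨a', b', hza', ha'b', hb'z, rfl⟩ := relocate hB z hzB
    have hpB : (p : S1) ∈ (fun t : ℝ => (t : S1)) '' Set.Icc a' b' :=
      hAB ⟨p, ⟨ha_le, hb_ge⟩, rfl⟩
    have hpmem : p ∈ Set.Icc a' b' := mem_window_lift hza' hb'z hp hpB
    have hsub : Set.Icc a' b' ⊆ N' := fun t ht =>
      ⟨⟨by linarith [ht.1], by linarith [ht.2]⟩, hBN _ ⟨t, ht, rfl⟩⟩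
    have h1 : a ≤ a' := csInf_le ⟨z, hSLbdd⟩
      ⟨hpmem.1, fun t ht => hsub ⟨ht.1, le_trans ht.2 hpmem.2⟩⟩
    have h2 : b' ≤ b := le_csSup ⟨z + 2 * Real.pi, hSRbdd⟩
      ⟨hpmem.2, fun t ht => hsub ⟨le_trans hpmem.1 ht.1, ht.2⟩⟩
    exact Set.Subset.antisymm hAB (Set.image_mono (Set.Icc_subset_Icc h1 h2))

lemma arc_eq_of_inter {r : ℝ} {Θ : Set S1} {z : ℝ} (hz : ExcludedBy r Θ (z : S1))
    {A₁ A₂ : Set S1} (h1 : IsArc r Θ A₁) (h2 : IsArc r Θ A₂)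
    (hne : (A₁ ∩ A₂).Nonempty) : A₁ = A₂ := by
  have hz1 : (z : S1) ∉ A₁ := fun h => h1.2.2.1 _ h hz
  have hz2 : (z : S1) ∉ A₂ := fun h => h2.2.2.1 _ h hz
  obtain ⟨a₁, b₁, hza₁, hab₁, hbz₁, hA₁⟩ := relocate h1.1 z hz1
  obtain ⟨a₂, b₂, hza₂, hab₂, hbz₂, hA₂⟩ := relocate h2.1 z hz2
  obtain ⟨x, hx1, hx2⟩ := hne
  rw [hA₁] at hx1
  obtain ⟨t, ht, rfl⟩ := hx1
  have htIoo : t ∈ Set.Ioo z (z + 2 * Real.pi) :=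
    ⟨lt_of_lt_of_le hza₁ ht.1, lt_of_le_of_lt ht.2 hbz₁⟩
  have ht2 : t ∈ Set.Icc a₂ b₂ := mem_window_lift hza₂ hbz₂ htIoo (by rwa [hA₂] at hx2)
  have hmM : min a₁ a₂ ≤ max b₁ b₂ :=
    le_trans (le_trans (min_le_left _ _) (le_trans ht.1 ht.2)) (le_max_left _ _)
  have key : Set.Icc a₁ b₁ ∪ Set.Icc a₂ b₂ = Set.Icc (min a₁ a₂) (max b₁ b₂) := by
    apply Set.Subset.antisymm
    · apply Set.union_subset
      · exact Set.Icc_subset_Icc (min_le_left _ _) (le_max_left _ _)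
      · exact Set.Icc_subset_Icc (min_le_right _ _) (le_max_right _ _)
    · intro s hs
      rcases le_total s t with hle | hle
      · rcases le_total a₁ a₂ with h | h
        · left; exact ⟨by simpa [min_eq_left h] using hs.1, le_trans hle ht.2⟩
        · right; exact ⟨by simpa [min_eq_right h] using hs.1, le_trans hle ht2.2⟩
      · rcases le_total b₁ b₂ with h | h
        · right; exact ⟨le_trans ht2.1 hle, by simpa [max_eq_right h] using hs.2⟩
        · left; exact ⟨le_trans ht.1 hle, by simpa [max_eq_left h] using hs.2⟩
  have himg : A₁ ∪ A₂ = (fun t : ℝ => (t : S1)) '' Set.Icc (min a₁ a₂) (max b₁ b₂) := by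
    rw [hA₁, hA₂, ← Set.image_union, key]
  have hBarc : IsClosedArc ((fun t : ℝ => (t : S1)) '' Set.Icc (min a₁ a₂) (max b₁ b₂)) := by
    refine ⟨min a₁ a₂, max b₁ b₂, hmM, ?_, rfl⟩
    have h1 : z < min a₁ a₂ := lt_min hza₁ hza₂
    have h2 : max b₁ b₂ < z + 2 * Real.pi := max_lt hbz₁ hbz₂
    linarith
  have hBn : (((fun t : ℝ => (t : S1)) '' Set.Icc (min a₁ a₂) (max b₁ b₂)) ∩ Θ).Nonempty := by
    obtain ⟨w, hw1, hw2⟩ := h1.2.1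
    exact ⟨w, by rw [← himg]; exact Set.mem_union_left _ hw1, hw2⟩
  have hBN : ∀ x ∈ (fun t : ℝ => (t : S1)) '' Set.Icc (min a₁ a₂) (max b₁ b₂), ¬ ExcludedBy r Θ x := by
    intro x hx
    rw [← himg] at hx
    rcases hx with h | h
    · exact h1.2.2.1 x h
    · exact h2.2.2.1 x h
  have e1 : A₁ = (fun t : ℝ => (t : S1)) '' Set.Icc (min a₁ a₂) (max b₁ b₂) :=
    h1.2.2.2 _ hBarc hBn hBN (by rw [← himg]; exact Set.subset_union_left)
  have e2 : A₂ = (fun t : ℝ => (t : S1)) '' Set.Icc (min a₁ a₂) (max b₁ b₂) :=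
    h2.2.2.2 _ hBarc hBn hBN (by rw [← himg]; exact Set.subset_union_right)
  rw [e1, e2]

lemma arcs_finite {r : ℝ} {Θ : Set S1} (hΘ : Θ.Finite) {z : ℝ}
    (hz : ExcludedBy r Θ (z : S1)) : {A : Set S1 | IsArc r Θ A}.Finite := by
  apply Set.Finite.of_finite_image (f := fun A => A ∩ Θ)
  · apply Set.Finite.subset hΘ.finite_subsets
    rintro _ ⟨A, _, rfl⟩
    exact Set.inter_subset_right
  · intro A₁ h1 A₂ h2 heq
    obtain ⟨w, hw1, hwΘ⟩ := h1.2.1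
    have heq' : A₁ ∩ Θ = A₂ ∩ Θ := heq
    have hw2 : w ∈ A₂ ∩ Θ := by rw [← heq']; exact ⟨hw1, hwΘ⟩
    exact arc_eq_of_inter hz h1 h2 ⟨w, hw1, hw2.1⟩

lemma exists_excluded_between {r : ℝ} {Θ : Set S1} {A : Set S1} (hA : IsArc r Θ A)
    {a b m : ℝ} (hab : a ≤ b) (hA_eq : A = (fun t : ℝ => (t : S1)) '' Set.Icc a b)
    (hm1 : b < m) (hm2 : m < a + 2 * Real.pi) :
    ∃ s : ℝ, s ∈ Set.Ioc b m ∧ ExcludedBy r Θ ((s : S1)) := by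
  by_contra hcon
  push_neg at hcon
  have hBarc : IsClosedArc ((fun t : ℝ => (t : S1)) '' Set.Icc a m) :=
    ⟨a, m, by linarith, hm2, rfl⟩
  have hsub : A ⊆ (fun t : ℝ => (t : S1)) '' Set.Icc a m := by
    rw [hA_eq]; exact Set.image_mono (Set.Icc_subset_Icc (le_refl a) (le_of_lt hm1))
  have hBn : (((fun t : ℝ => (t : S1)) '' Set.Icc a m) ∩ Θ).Nonempty := by
    obtain ⟨w, hw1, hw2⟩ := hA.2.1
    exact ⟨w, hsub hw1, hw2⟩
  have hBN : ∀ x ∈ (fun t : ℝ => (t : S1)) '' Set.Icc a m, ¬ ExcludedBy r Θ x := by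
    rintro x ⟨t, ht, rfl⟩
    rcases le_or_gt t b with h | h
    · exact hA.2.2.1 _ (by rw [hA_eq]; exact ⟨t, ⟨ht.1, h⟩, rfl⟩)
    · exact hcon t ⟨h, ht.2⟩
  have heq := hA.2.2.2 _ hBarc hBn hBN hsub
  have hmA : ((m : ℝ) : S1) ∈ A := by
    rw [heq]; exact ⟨m, ⟨by linarith, le_refl m⟩, rfl⟩
  rw [hA_eq] at hmA
  obtain ⟨t, ht, htm⟩ := hmA
  obtain ⟨k, hk⟩ := coe_eq_coe.mp htm
  have hcase : k ≥ 1 ∨ k ≤ 0 := by omega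
  rcases hcase with h | h
  · have : (1:ℝ) ≤ (k:ℝ) := by exact_mod_cast h
    nlinarith [ht.1, Real.pi_pos]
  · have : (k:ℝ) ≤ 0 := by exact_mod_cast h
    nlinarith [ht.2, Real.pi_pos]

lemma exists_excluded {r : ℝ} {Θ : Set S1} {A : Set S1} (hA : IsArc r Θ A) :
    ∃ z : ℝ, ExcludedBy r Θ ((z : S1)) := by
  obtain ⟨a, b, hab, hlt, hA_eq⟩ := hA.1
  obtain ⟨s, _, hs⟩ := exists_excluded_between hA hab hA_eq
    (show b < (b + (a + 2 * Real.pi)) / 2 by linarith)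
    (show (b + (a + 2 * Real.pi)) / 2 < a + 2 * Real.pi by linarith)
  exact ⟨_, hs⟩

/-- The key counting lemma: an interleaved configuration of `c` support points and
separating excluded points forces at least `c` arcs. -/
lemma arcs_lower_bound (r : ℝ) (Θ : Set S1) (hfin : Θ.Finite)
    (hdiam : ∀ x ∈ Θ, ∀ y ∈ Θ, dist x y ≤ r)
    (c : ℕ) (z : ℝ) (hz : ExcludedBy r Θ ((z : S1)))
    (u : Fin c → ℝ) (hu : ∀ i, u i ∈ Set.Ioo z (z + 2 * Real.pi))
    (huΘ : ∀ i, ((u i : ℝ) : S1) ∈ Θ)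
    (hsep : ∀ i j : Fin c, i < j →
      ∃ s : ℝ, u i < s ∧ s < u j ∧ ExcludedBy r Θ ((s : S1))) :
    c ≤ arcsCount r Θ := by
  have hAex : ∀ i : Fin c, ∃ A : Set S1, IsArc r Θ A ∧ ((u i : ℝ) : S1) ∈ A := by
    intro i
    exact exists_maximal_arc r Θ z (u i) hz (hu i) (huΘ i)
      (notExcluded_iff.mpr fun θ hθ => hdiam θ hθ _ (huΘ i))
  choose A hA hAu using hAex
  have hinj : Function.Injective A := by
    intro i j hij
    by_contra hne
    rcases Ne.lt_or_gt hne with hlt | hlt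
    case _ =>
      obtain ⟨s, hs1, hs2, hsex⟩ := hsep i j hlt
      have hzA : (z : S1) ∉ A i := fun h => (hA i).2.2.1 _ h hz
      obtain ⟨a, b, hza, hab, hbz, hAeq⟩ := relocate (hA i).1 z hzA
      have hui : u i ∈ Set.Icc a b := mem_window_lift hza hbz (hu i) (by rw [← hAeq]; exact hAu i)
      have huj : u j ∈ Set.Icc a b := mem_window_lift hza hbz (hu j)
        (by rw [← hAeq, hij]; exact hAu j)
      have hsA : ((s : ℝ) : S1) ∈ A i := by
        rw [hAeq]
        exact ⟨s, ⟨le_trans hui.1 (le_of_lt hs1), le_trans (le_of_lt hs2) huj.2⟩, rfl⟩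
      exact (hA i).2.2.1 _ hsA hsex
    case _ =>
      obtain ⟨s, hs1, hs2, hsex⟩ := hsep j i hlt
      have hzA : (z : S1) ∉ A i := fun h => (hA i).2.2.1 _ h hz
      obtain ⟨a, b, hza, hab, hbz, hAeq⟩ := relocate (hA i).1 z hzA
      have hui : u i ∈ Set.Icc a b := mem_window_lift hza hbz (hu i) (by rw [← hAeq]; exact hAu i)
      have huj : u j ∈ Set.Icc a b := mem_window_lift hza hbz (hu j)
        (by rw [← hAeq, hij]; exact hAu j)
      have hsA : ((s : ℝ) : S1) ∈ A i := by
        rw [hAeq]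
        exact ⟨s, ⟨le_trans huj.1 (le_of_lt hs1), le_trans (le_of_lt hs2) hui.2⟩, rfl⟩
      exact (hA i).2.2.1 _ hsA hsex
  have hrange : Set.range A ⊆ {B : Set S1 | IsArc r Θ B} := by
    rintro _ ⟨i, rfl⟩; exact hA i
  have hcard : (Set.range A).ncard = c := by
    rw [← Set.image_univ, Set.ncard_image_of_injective _ hinj, Set.ncard_univ]
    simp
  calc c = (Set.range A).ncard := hcard.symm
    _ ≤ arcsCount r Θ := Set.ncard_le_ncard hrange (arcs_finite hfin hz)

lemma coe_measure_eq_one {ν : ProbabilityMeasure S1} {S : Finset S1}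
    (hS : ν (↑S : Set S1) = 1) : (ν : MeasureTheory.Measure S1) (↑S : Set S1) = 1 := by
  have := (ProbabilityMeasure.ennreal_coeFn_eq_coeFn_toMeasure ν (↑S : Set S1)).symm
  rw [this, hS]
  simp

lemma measure_compl_finset_zero {ν : ProbabilityMeasure S1} {S : Finset S1}
    (hS : ν (↑S : Set S1) = 1) : (ν : MeasureTheory.Measure S1) ((↑S : Set S1)ᶜ) = 0 := by
  rw [prob_compl_eq_zero_iff (S.measurableSet)]
  exact coe_measure_eq_one hS

lemma suppSet_subset_finset {ν : ProbabilityMeasure S1} {S : Finset S1}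
    (hS : ν (↑S : Set S1) = 1) : suppSet ν ⊆ (↑S : Set S1) := by
  intro x hx
  by_contra hxS
  apply hx
  have h1 : (ν : MeasureTheory.Measure S1) {x} = 0 :=
    measure_mono_null (Set.singleton_subset_iff.mpr hxS) (measure_compl_finset_zero hS)
  simp only [← ProbabilityMeasure.null_iff_toMeasure_null] at h1
  exact h1

lemma atom_ne_zero_measure {ν : ProbabilityMeasure S1} {x : S1} (h : ν {x} ≠ 0) :
    (ν : MeasureTheory.Measure S1) {x} ≠ 0 := by
  rwa [Ne, ← ProbabilityMeasure.null_iff_toMeasure_null]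

/-- A basic open "detector" neighbourhood in the space of probability measures which
guarantees an atom near `w` for finitely supported measures. -/
lemma exists_atom_near (w : S1) {ε : ℝ} (hε : 0 < ε) :
    ∃ O : Set (ProbabilityMeasure S1), IsOpen O ∧
      (∀ ρ : ProbabilityMeasure S1, ρ {w} ≠ 0 → ρ ∈ O) ∧
      (∀ ρ ∈ O, ∀ S : Finset S1, ρ (↑S : Set S1) = 1 →
        ∃ x : S1, ρ {x} ≠ 0 ∧ dist w x < ε) := by
  have hcont : Continuous fun x : S1 => Real.toNNReal (1 - dist w x / ε) :=
    continuous_real_toNNReal.comp (by fun_prop)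
  set f : BoundedContinuousFunction S1 NNReal := BoundedContinuousFunction.mkOfCompact ⟨_, hcont⟩ with hf
  have hfx : ∀ x : S1, f x = Real.toNNReal (1 - dist w x / ε) := fun x => rfl
  refine ⟨(fun ρ : ProbabilityMeasure S1 => ρ.toFiniteMeasure.testAgainstNN f) ⁻¹'
    Set.Ioi 0, (ProbabilityMeasure.continuous_testAgainstNN_eval f).isOpen_preimage _
      isOpen_Ioi, ?_, ?_⟩
  · intro ρ hρ
    simp only [Set.mem_preimage, Set.mem_Ioi]
    rw [pos_iff_ne_zero]
    intro hzero
    have h0 : (∫⁻ x, (f x : ENNReal) ∂(ρ : MeasureTheory.Measure S1)) = 0 := by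
      have := MeasureTheory.FiniteMeasure.testAgainstNN_coe_eq
        (μ := ρ.toFiniteMeasure) (f := f)
      rw [ProbabilityMeasure.toMeasure_comp_toFiniteMeasure_eq_toMeasure] at this
      rw [hzero] at this
      simpa using this.symm
    have hle : (f w : ENNReal) * (ρ : MeasureTheory.Measure S1) {w}
        ≤ ∫⁻ x, (f x : ENNReal) ∂(ρ : MeasureTheory.Measure S1) := by
      rw [← MeasureTheory.lintegral_singleton (fun x => (f x : ENNReal)) w]
      exact MeasureTheory.setLIntegral_le_lintegral _ _
    rw [h0, le_zero_iff, mul_eq_zero] at hle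
    rcases hle with h | h
    · rw [hfx w, dist_self, zero_div, sub_zero] at h
      simp at h
    · exact atom_ne_zero_measure hρ h
  · intro ρ hρ S hS
    by_contra hcon
    push_neg at hcon
    simp only [Set.mem_preimage, Set.mem_Ioi] at hρ
    have hzero : (∫⁻ x, (f x : ENNReal) ∂(ρ : MeasureTheory.Measure S1)) = 0 := by
      rw [← MeasureTheory.lintegral_add_compl (fun x => (f x : ENNReal)) S.measurableSet]
      rw [MeasureTheory.setLIntegral_measure_zero _ _ (measure_compl_finset_zero hS), add_zero]
      rw [MeasureTheory.lintegral_finset]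
      apply Finset.sum_eq_zero
      intro x _
      rcases eq_or_ne ((ρ : MeasureTheory.Measure S1) {x}) 0 with h | h
      · rw [h, mul_zero]
      · have hx : ρ {x} ≠ 0 := by
          rw [Ne, ProbabilityMeasure.null_iff_toMeasure_null]; exact h
        have hd : ε ≤ dist w x := hcon x hx
        have : f x = 0 := by
          rw [hfx x, Real.toNNReal_eq_zero]
          have : (1:ℝ) ≤ dist w x / ε := (one_le_div hε).mpr hd
          linarith
        rw [this]
        simp
    have : ρ.toFiniteMeasure.testAgainstNN f = 0 := by
      have := MeasureTheory.FiniteMeasure.testAgainstNN_coe_eq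
        (μ := ρ.toFiniteMeasure) (f := f)
      rw [ProbabilityMeasure.toMeasure_comp_toFiniteMeasure_eq_toMeasure, hzero] at this
      exact_mod_cast this
    rw [this] at hρ
    exact lt_irrefl 0 hρ

lemma dist_le_of_diam {s : Set S1} {r : ℝ} (h : Metric.diam s ≤ r)
    {x y : S1} (hx : x ∈ s) (hy : y ∈ s) : dist x y ≤ r :=
  le_trans (Metric.dist_le_diam_of_mem (isCompact_univ.isBounded.subset (Set.subset_univ s)) hx hy) h

end WProof

open WProof

/-- For every `r ∈ [0,π)` and every `k ≥ 0`, the set `W_{2k+1}(r)`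
is closed in `VRm(S¹;r)`. -/
theorem W_isClosed (r : ℝ) (hr0 : 0 ≤ r) (hrπ : r < Real.pi) (k : ℕ) :
    IsClosed {μ : ↥(VRm r) | (μ : Pfin S1) ∈ W r k} := by
  rw [← isOpen_compl_iff, isOpen_iff_mem_nhds]
  intro μ₀ hμ₀
  set Θ : Set S1 := suppSet (μ₀ : Pfin S1).1 with hΘdef
  set c : ℕ := 2 * k + 2 with hcdef
  have hμarc : 2 * k + 1 < arcsCount r Θ := by
    by_contra h
    push_neg at h
    exact hμ₀ (Set.mem_sep μ₀.2 h)
  have hge : c ≤ arcsCount r Θ := by omega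
  obtain ⟨T, hTsub, hTcard⟩ := Set.exists_subset_card_eq hge
  have hTfin : T.Finite := Set.finite_of_ncard_ne_zero (by omega)
  have hc0 : 0 < c := by omega
  haveI : Nonempty (Fin c) := ⟨⟨0, hc0⟩⟩
  have hFcard : hTfin.toFinset.card = c := by
    rw [← Set.ncard_eq_toFinset_card T hTfin]; exact hTcard
  set eqv := hTfin.toFinset.equivFinOfCardEq hFcard with heqv
  set e : Fin c → Set S1 := fun i => ((eqv.symm i : hTfin.toFinset) : Set S1) with he
  have hinj : Function.Injective e := by
    intro i j hij
    have : eqv.symm i = eqv.symm j := Subtype.ext hij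
    simpa using congrArg eqv this
  have hA : ∀ i, IsArc r Θ (e i) := fun i =>
    hTsub (hTfin.mem_toFinset.mp (eqv.symm i).2)
  obtain ⟨z, hz⟩ := exists_excluded (hA ⟨0, hc0⟩)
  have hzA : ∀ i, (z : S1) ∉ e i := fun i h => (hA i).2.2.1 _ h hz
  choose a b hza hab hbz hAeq using fun i => relocate (hA i).1 z (hzA i)
  choose w hw hwΘ using fun i => (hA i).2.1
  have hwlift : ∀ i, ∃ t, t ∈ Set.Icc (a i) (b i) ∧ ((t : ℝ) : S1) = w i := by
    intro i
    have := hw i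
    rw [hAeq i] at this
    exact this
  choose t ht htw using hwlift
  have hdisj : ∀ i j : Fin c, ∀ s : ℝ,
      s ∈ Set.Icc (a i) (b i) → s ∈ Set.Icc (a j) (b j) → i = j := by
    intro i j s hsi hsj
    apply hinj
    apply arc_eq_of_inter hz (hA i) (hA j)
    exact ⟨((s : ℝ) : S1), by rw [hAeq i]; exact ⟨s, hsi, rfl⟩,
      by rw [hAeq j]; exact ⟨s, hsj, rfl⟩⟩
  set sp := Tuple.sort t with hspdef
  have hmono : Monotone (t ∘ sp) := Tuple.monotone_sort t
  have hgap : ∀ i j : Fin c, i < j → b (sp i) < a (sp j) := by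
    intro i j hij
    by_contra hcon
    push_neg at hcon
    have hts : t (sp i) ≤ t (sp j) := hmono (le_of_lt hij)
    have hne : sp i ≠ sp j := fun h => (ne_of_lt hij) (sp.injective h)
    rcases le_total (a (sp i)) (a (sp j)) with h | h
    · exact hne (hdisj _ _ (a (sp j)) ⟨h, hcon⟩ ⟨le_refl _, hab _⟩)
    · refine hne (hdisj _ _ (a (sp i)) ⟨le_refl _, hab _⟩ ⟨h, ?_⟩)
      exact le_trans (ht (sp i)).1 (le_trans hts (ht (sp j)).2)
  have hsepμ : ∀ i j : Fin c, i < j → ∃ s : ℝ,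
      t (sp i) < s ∧ s < t (sp j) ∧ ExcludedBy r Θ ((s : ℝ) : S1) := by
    intro i j hij
    have hgapij := hgap i j hij
    obtain ⟨s, hs, hsex⟩ := exists_excluded_between (hA (sp i)) (hab (sp i)) (hAeq (sp i))
      (show b (sp i) < (b (sp i) + a (sp j)) / 2 by linarith)
      (show (b (sp i) + a (sp j)) / 2 < a (sp i) + 2 * Real.pi by
        have h1 := hbz (sp j)
        have h2 := hza (sp i)
        have h3 := hab (sp j)
        linarith)
    refine ⟨s, lt_of_le_of_lt (ht (sp i)).2 hs.1, ?_, hsex⟩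
    have : s ≤ (b (sp i) + a (sp j)) / 2 := hs.2
    have h4 : (b (sp i) + a (sp j)) / 2 < a (sp j) := by linarith
    exact lt_of_le_of_lt this (lt_of_lt_of_le h4 (ht (sp j)).1)
  choose sfun hs1 hs2 hsex using hsepμ
  obtain ⟨qz, hqzΘ, hqzd⟩ := hz
  choose qfun hqΘ hqd using hsex
  have hWin : ∀ i, z < t (sp i) ∧ t (sp i) < z + 2 * Real.pi := fun i =>
    ⟨lt_of_lt_of_le (hza (sp i)) (ht (sp i)).1, lt_of_le_of_lt (ht (sp i)).2 (hbz (sp i))⟩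
  set g2 : Fin c → ℝ := fun i => min (t (sp i) - z) (z + 2 * Real.pi - t (sp i)) with hg2
  set g1 : Fin c × Fin c → ℝ := fun p =>
    if h : p.1 < p.2 then
      min (min (dist (qfun p.1 p.2 h) ((sfun p.1 p.2 h : ℝ) : S1) - r)
        (sfun p.1 p.2 h - t (sp p.1))) (t (sp p.2) - sfun p.1 p.2 h)
    else 1 with hg1
  have hg2pos : ∀ i, 0 < g2 i := fun i =>
    lt_min (by linarith [(hWin i).1]) (by linarith [(hWin i).2])
  have hg1pos : ∀ p, 0 < g1 p := by
    intro p
    rw [hg1]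
    dsimp only
    split
    case isTrue h =>
      exact lt_min (lt_min (by linarith [hqd p.1 p.2 h]) (by linarith [hs1 p.1 p.2 h]))
        (by linarith [hs2 p.1 p.2 h])
    case isFalse h => norm_num
  set εb : ℝ := min (min (Finset.univ.inf' Finset.univ_nonempty g1)
    (Finset.univ.inf' Finset.univ_nonempty g2)) (dist qz ((z : ℝ) : S1) - r) with hεb
  have hεbpos : 0 < εb := by
    apply lt_min (lt_min ?_ ?_) (by linarith [hqzd])
    · rw [Finset.lt_inf'_iff]; intro p _; exact hg1pos p
    · rw [Finset.lt_inf'_iff]; intro i _; exact hg2pos i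
  set ε : ℝ := εb / 2 with hεdef
  have hεpos : 0 < ε := by positivity
  have hεlt : ε < εb := by simp only [hεdef]; linarith
  have hbound1 : ∀ i j (h : i < j), εb ≤ dist (qfun i j h) ((sfun i j h : ℝ) : S1) - r
      ∧ εb ≤ sfun i j h - t (sp i) ∧ εb ≤ t (sp j) - sfun i j h := by
    intro i j h
    have h1 : εb ≤ g1 (i, j) :=
      le_trans (le_trans (min_le_left _ _) (min_le_left _ _))
        (Finset.inf'_le g1 (Finset.mem_univ (i, j)))
    rw [hg1] at h1
    dsimp only at h1
    rw [dif_pos h] at h1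
    exact ⟨le_trans h1 (le_trans (min_le_left _ _) (min_le_left _ _)),
      le_trans h1 (le_trans (min_le_left _ _) (min_le_right _ _)),
      le_trans h1 (min_le_right _ _)⟩
  have hbound2 : ∀ i, εb ≤ t (sp i) - z ∧ εb ≤ z + 2 * Real.pi - t (sp i) := by
    intro i
    have h1 : εb ≤ g2 i :=
      le_trans (le_trans (min_le_left _ _) (min_le_right _ _))
        (Finset.inf'_le g2 (Finset.mem_univ i))
    exact ⟨le_trans h1 (min_le_left _ _), le_trans h1 (min_le_right _ _)⟩
  have hbound0 : εb ≤ dist qz ((z : ℝ) : S1) - r := min_le_right _ _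
  choose O hOopen hOmem hOdet using fun w : S1 => exists_atom_near w hεpos
  set qq : Fin c × Fin c → S1 := fun p =>
    if h : p.1 < p.2 then qfun p.1 p.2 h else qz with hqq
  set U : Set (ProbabilityMeasure S1) :=
    ((⋂ i : Fin c, O (((t (sp i) : ℝ)) : S1)) ∩ (⋂ p : Fin c × Fin c, O (qq p))) ∩ O qz
    with hU
  have hUopen : IsOpen U :=
    ((isOpen_iInter_of_finite fun i => hOopen _).inter
      (isOpen_iInter_of_finite fun p => hOopen _)).inter (hOopen qz)
  have hΦ : Continuous fun m : ↥(VRm r) => ((m : Pfin S1) : ProbabilityMeasure S1) :=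
    continuous_subtype_val.comp continuous_subtype_val
  have hμ₀U : ((μ₀ : Pfin S1) : ProbabilityMeasure S1) ∈ U := by
    refine ⟨⟨Set.mem_iInter.mpr fun i => ?_, Set.mem_iInter.mpr fun p => ?_⟩, ?_⟩
    · apply hOmem
      rw [htw (sp i)]
      exact hwΘ (sp i)
    · apply hOmem
      rw [hqq]
      dsimp only
      split
      case isTrue h => exact hqΘ p.1 p.2 h
      case isFalse h => exact hqzΘ
    · exact hOmem _ _ hqzΘ
  rw [_root_.mem_nhds_iff]
  refine ⟨(fun m : ↥(VRm r) => ((m : Pfin S1) : ProbabilityMeasure S1)) ⁻¹' U,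
    ?_, hUopen.preimage hΦ, hμ₀U⟩
  intro ν hν
  simp only [Set.mem_compl_iff, Set.mem_setOf_eq]
  intro hνW
  have hcount : arcsCountM r (ν : Pfin S1) ≤ 2 * k + 1 := hνW.2
  obtain ⟨S, hS⟩ := (ν : Pfin S1).2
  have hfin' : (suppSet ((ν : Pfin S1) : ProbabilityMeasure S1)).Finite :=
    (S.finite_toSet).subset (suppSet_subset_finset hS)
  have hdiam' : ∀ x ∈ suppSet ((ν : Pfin S1) : ProbabilityMeasure S1),
      ∀ y ∈ suppSet ((ν : Pfin S1) : ProbabilityMeasure S1), dist x y ≤ r :=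
    fun x hx y hy => dist_le_of_diam ν.2 hx hy
  obtain ⟨⟨hν1, hν2⟩, hν3⟩ := hν
  obtain ⟨q'z, hq'zatom, hq'zd⟩ := hOdet qz _ hν3 S hS
  have hzex' : ExcludedBy r (suppSet ((ν : Pfin S1) : ProbabilityMeasure S1)) ((z : ℝ) : S1) := by
    refine ⟨q'z, hq'zatom, ?_⟩
    have htri := dist_triangle qz q'z ((z : ℝ) : S1)
    have hd := hq'zd
    linarith [hbound0, hεlt]
  have hpat : ∀ i : Fin c, ∃ x, ((ν : Pfin S1) : ProbabilityMeasure S1) {x} ≠ 0 ∧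
      dist (((t (sp i) : ℝ)) : S1) x < ε :=
    fun i => hOdet _ _ (Set.mem_iInter.mp hν1 i) S hS
  choose p hpatom hpd using hpat
  choose u hup huc using fun i => exists_lift_near (t (sp i)) (p i) (hpd i)
  have hwin : ∀ i, u i ∈ Set.Ioo z (z + 2 * Real.pi) := by
    intro i
    have h1 := (hbound2 i).1
    have h2 := (hbound2 i).2
    have h3 := abs_lt.mp (huc i)
    constructor <;> [linarith; linarith]
  have huΘ : ∀ i, ((u i : ℝ) : S1) ∈ suppSet ((ν : Pfin S1) : ProbabilityMeasure S1) := by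
    intro i
    show ((ν : Pfin S1) : ProbabilityMeasure S1) {((u i : ℝ) : S1)} ≠ 0
    rw [hup i]
    exact hpatom i
  have hsep' : ∀ i j : Fin c, i < j → ∃ s : ℝ, u i < s ∧ s < u j ∧
      ExcludedBy r (suppSet ((ν : Pfin S1) : ProbabilityMeasure S1)) ((s : ℝ) : S1) := by
    intro i j h
    refine ⟨sfun i j h, ?_, ?_, ?_⟩
    · have h1 := (hbound1 i j h).2.1
      have h3 := abs_lt.mp (huc i)
      linarith
    · have h1 := (hbound1 i j h).2.2
      have h3 := abs_lt.mp (huc j)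
      linarith
    · have hmem : ((ν : Pfin S1) : ProbabilityMeasure S1) ∈ O (qq (i, j)) :=
        Set.mem_iInter.mp hν2 (i, j)
      rw [hqq] at hmem
      dsimp only at hmem
      rw [dif_pos h] at hmem
      obtain ⟨q', hq'atom, hq'd⟩ := hOdet _ _ hmem S hS
      refine ⟨q', hq'atom, ?_⟩
      have htri := dist_triangle (qfun i j h) q' ((sfun i j h : ℝ) : S1)
      have h1 := (hbound1 i j h).1
      linarith
  have hlower := arcs_lower_bound r (suppSet ((ν : Pfin S1) : ProbabilityMeasure S1))
    hfin' hdiam' c z hzex' u hwin huΘ hsep'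
  have : c ≤ arcsCountM r (ν : Pfin S1) := hlower
  omega
end
end
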